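/- arXiv:2001.05774 — 4 statements merged into one kernel-verified Lean document; each statement's English description precedes it below -/
import Mathlib

section
/- Let φ: ℝ → ℝ be compactly supported, twice continuously differentiable, and exact up to degree 2 (∑_j j^m φ(t−j) = t^m for m=0,1,2). Define ψ(t,p) := ∑_{j∈ℤ} φ''(t−j)·(j−p)_+^{1/2}. Then there exists C > 0 such that |ψ(t,p)| ≤ C·(t−p)^{−3/2} for all t, p with t − p ≥ 1. -/
lemma aux_key (s v : ℝ) (hs : 0 < s) (hv : 0 < v) :
    v - (s + (v^2 - s^2)/(2*s) - (v^2-s^2)^2/(8*s^3))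
      = (v^2-s^2)^3*(v+3*s)/(8*s^3*(v+s)^3) := by
  have h1 : v + s ≠ 0 := by positivity
  have h2 : s ≠ 0 := hs.ne'
  field_simp
  ring

lemma aux_rpow (d : ℝ) (hd : 0 < d) : d ^ (-(3:ℝ)/2) = (Real.sqrt d ^ 3)⁻¹ := by
  rw [Real.sqrt_eq_rpow, ← Real.rpow_natCast (d ^ ((1:ℝ)/2)) 3, ← Real.rpow_mul hd.le,
    ← Real.rpow_neg hd.le]
  norm_num

lemma aux_remainder (d u : ℝ) (hd : 0 < d) (hu : 0 < d + u) :
    |Real.sqrt (d+u) - (Real.sqrt d + u/(2*Real.sqrt d) - u^2/(8*Real.sqrt d^3))|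
      ≤ (3/8) * |u|^3 / Real.sqrt d ^ 5 := by
  set s := Real.sqrt d with hsdef
  set v := Real.sqrt (d+u) with hvdef
  have hs : 0 < s := Real.sqrt_pos.mpr hd
  have hv : 0 < v := Real.sqrt_pos.mpr hu
  have hs2 : s^2 = d := Real.sq_sqrt hd.le
  have hv2 : v^2 = d + u := Real.sq_sqrt hu.le
  have huu : u = v^2 - s^2 := by rw [hs2, hv2]; ring
  rw [huu, aux_key s v hs hv]
  rw [abs_div, abs_mul]
  have h1 : |(v^2-s^2)^3| = |v^2-s^2|^3 := by rw [abs_pow]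
  have h2 : |v+3*s| = v+3*s := abs_of_pos (by positivity)
  have h3 : |8*s^3*(v+s)^3| = 8*s^3*(v+s)^3 := abs_of_pos (by positivity)
  rw [h1, h2, h3]
  rw [div_le_div_iff₀ (by positivity) (by positivity)]
  have key : (v+3*s) * s^2 ≤ 3 * (v+s)^3 := by nlinarith [mul_pos hv hs, pow_pos hv 3, sq_nonneg v]
  calc |v^2-s^2|^3 * (v+3*s) * (s^5)
      = (|v^2-s^2|^3 * s^3) * ((v+3*s) * s^2) := by ring
    _ ≤ (|v^2-s^2|^3 * s^3) * (3 * (v+s)^3) := by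
        apply mul_le_mul_of_nonneg_left key (by positivity)
    _ = 3/8 * |v^2-s^2|^3 * (8*s^3*(v+s)^3) := by ring

lemma aux_notin {R t : ℝ} {j : ℤ} (hj : j ∉ Finset.Icc ⌈t - (R+1)⌉ ⌊t + (R+1)⌋) :
    R + 1 < |t - j| := by
  rw [Finset.mem_Icc, not_and_or] at hj
  rcases hj with hj | hj
  · push_neg at hj
    have : (j:ℝ) < t - (R+1) := by exact_mod_cast Int.lt_ceil.mp hj
    calc R + 1 < t - j := by linarith
      _ ≤ |t - j| := le_abs_self _
  · push_neg at hj
    have : t + (R+1) < (j:ℝ) := by exact_mod_cast Int.floor_lt.mp hj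
    calc R + 1 < -(t - j) := by linarith
      _ ≤ |t - j| := neg_le_abs _

lemma aux_sum (φ : ℝ → ℝ) (hsm : ContDiff ℝ 2 φ) (R : ℝ)
    (hφ0 : ∀ x, R < |x| → φ x = 0)
    (hexact : ∀ m : ℕ, m ≤ 2 → ∀ t : ℝ, ∑' j : ℤ, (j : ℝ) ^ m * φ (t - j) = t ^ m)
    (m : ℕ) (hm : m ≤ 2) (t₀ : ℝ) :
    ∑ j ∈ Finset.Icc ⌈t₀ - (R+1)⌉ ⌊t₀ + (R+1)⌋, (j:ℝ)^m * deriv (deriv φ) (t₀ - j)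
      = deriv (deriv (fun x : ℝ => x^m)) t₀ := by
  set E := Finset.Icc ⌈t₀ - (R+1)⌉ ⌊t₀ + (R+1)⌋ with hEdef
  set G : ℝ → ℝ := fun t => ∑ j ∈ E, (j:ℝ)^m * φ (t - j) with hGdef
  have hdiff : Differentiable ℝ φ := hsm.differentiable (by norm_num)
  have hφ' : ContDiff ℝ 1 (deriv φ) := by
    have := (contDiff_succ_iff_deriv.mp (show ContDiff ℝ (1+1) φ from by exact_mod_cast hsm)).2.2
    exact_mod_cast this
  have hdiff' : Differentiable ℝ (deriv φ) := hφ'.differentiable (by norm_num)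
  have heq : G =ᶠ[nhds t₀] fun t => t^m := by
    filter_upwards [Metric.ball_mem_nhds t₀ one_pos] with t ht
    have hd : |t - t₀| < 1 := by rwa [Metric.mem_ball, Real.dist_eq] at ht
    show ∑ j ∈ E, (j:ℝ)^m * φ (t - j) = t^m
    have : ∑ j ∈ E, (j:ℝ)^m * φ (t - j) = ∑' j : ℤ, (j:ℝ)^m * φ (t - j) := by
      symm; apply tsum_eq_sum
      intro j hj
      have h1 : R + 1 < |t₀ - j| := aux_notin hj
      have h2 : R < |t - j| := by
        have := abs_sub_abs_le_abs_sub (t₀ - (j:ℝ)) (t - (j:ℝ))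
        have h3 : |t₀ - j - (t - j)| = |t₀ - t| := by ring_nf
        rw [h3] at this
        have h4 : |t₀ - t| < 1 := by rwa [abs_sub_comm]
        linarith
      rw [hφ0 _ h2, mul_zero]
    rw [this, hexact m hm t]
  have hdG : ∀ t : ℝ, HasDerivAt G (∑ j ∈ E, (j:ℝ)^m * deriv φ (t - j)) t := by
    intro t
    apply HasDerivAt.fun_sum
    intro j _
    have h2 : HasDerivAt (fun t => φ (t - (j:ℝ))) (deriv φ (t - j)) t := by
      simpa [Function.comp_def] using (hdiff (t - (j:ℝ))).hasDerivAt.comp t ((hasDerivAt_id t).sub_const (j:ℝ))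
    exact h2.const_mul _
  set G' : ℝ → ℝ := fun t => ∑ j ∈ E, (j:ℝ)^m * deriv φ (t - j) with hG'def
  have hdG' : ∀ t : ℝ, HasDerivAt G' (∑ j ∈ E, (j:ℝ)^m * deriv (deriv φ) (t - j)) t := by
    intro t
    apply HasDerivAt.fun_sum
    intro j _
    have h2 : HasDerivAt (fun t => deriv φ (t - (j:ℝ))) (deriv (deriv φ) (t - j)) t := by
      simpa [Function.comp_def] using (hdiff' (t - (j:ℝ))).hasDerivAt.comp t ((hasDerivAt_id t).sub_const (j:ℝ))
    exact h2.const_mul _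
  have hGG' : deriv G = G' := funext fun t => (hdG t).deriv
  have key : deriv (deriv G) t₀ = deriv (deriv (fun x : ℝ => x^m)) t₀ :=
    (heq.deriv).deriv_eq
  rw [hGG'] at key
  rw [← key, (hdG' t₀).deriv]

/-- Decay estimate `|ψ(t,p)| ≤ C (t-p)^{-3/2}` for `t - p ≥ 1`, when `φ` is C²,
compactly supported, and exact up to degree 2. -/
theorem stmt_3 (φ : ℝ → ℝ) (hsupp : HasCompactSupport φ) (hsm : ContDiff ℝ 2 φ)
    (hexact : ∀ m : ℕ, m ≤ 2 → ∀ t : ℝ, ∑' j : ℤ, (j : ℝ) ^ m * φ (t - j) = t ^ m)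
    (ψ : ℝ → ℝ → ℝ)
    (hψ : ∀ t p : ℝ, ψ t p =
      ∑' j : ℤ, iteratedDeriv 2 φ (t - j) * Real.sqrt (max ((j : ℝ) - p) 0)) :
    ∃ C : ℝ, 0 < C ∧ ∀ t p : ℝ, 1 ≤ t - p → |ψ t p| ≤ C * (t - p) ^ (-(3:ℝ)/2) := by
  -- support radius
  obtain ⟨r, hr⟩ := hsupp.isBounded.subset_closedBall (0:ℝ)
  set R : ℝ := max r 1 with hRdef
  have hR1 : 1 ≤ R := le_max_right _ _
  have hφ0 : ∀ x, R < |x| → φ x = 0 := by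
    intro x hx
    apply image_eq_zero_of_notMem_tsupport
    intro hmem
    have := hr hmem
    rw [Metric.mem_closedBall, Real.dist_eq, sub_zero] at this
    have : |x| ≤ R := le_trans this (le_max_left _ _)
    linarith
  -- second derivative
  have hΦeq : iteratedDeriv 2 φ = deriv (deriv φ) := by
    rw [show (2:ℕ) = 0+1+1 from rfl, iteratedDeriv_succ, iteratedDeriv_succ, iteratedDeriv_zero]
  set Φ : ℝ → ℝ := deriv (deriv φ) with hΦdef
  have hopen : IsOpen {x : ℝ | R < |x|} := isOpen_lt continuous_const continuous_abs
  have hd1 : ∀ x, R < |x| → deriv φ x = 0 := by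
    intro x hx
    have hev : φ =ᶠ[nhds x] (fun _ => 0) := by
      filter_upwards [hopen.mem_nhds hx] with y hy using hφ0 y hy
    rw [hev.deriv_eq]; exact deriv_const x 0
  have hΦ0 : ∀ x, R < |x| → Φ x = 0 := by
    intro x hx
    have hev : deriv φ =ᶠ[nhds x] (fun _ => 0) := by
      filter_upwards [hopen.mem_nhds hx] with y hy using hd1 y hy
    rw [hΦdef, hev.deriv_eq]; exact deriv_const x 0
  -- bound on Φ
  have hcs : HasCompactSupport Φ := hsupp.deriv.deriv
  have hco : Continuous Φ := by
    have := hsm.continuous_iteratedDeriv 2 le_rfl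
    rwa [hΦeq] at this
  obtain ⟨M, hM⟩ := hcs.norm.exists_bound_of_continuous hco.norm
  have hM' : ∀ x, |Φ x| ≤ M := by simpa [Real.norm_eq_abs] using hM
  have hM0 : 0 ≤ M := le_trans (abs_nonneg _) (hM' 0)
  -- the finite window
  set E : ℝ → Finset ℤ := fun t => Finset.Icc ⌈t - (R+1)⌉ ⌊t + (R+1)⌋ with hEdef
  have hψfin : ∀ t p : ℝ, ψ t p = ∑ j ∈ E t, Φ (t - j) * Real.sqrt (max ((j:ℝ) - p) 0) := by
    intro t p
    rw [hψ, hΦeq]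
    apply tsum_eq_sum
    intro j hj
    have h1 : R + 1 < |t - j| := aux_notin hj
    rw [hΦ0 _ (by linarith), zero_mul]
  -- cardinality bound
  have hcard : ∀ t : ℝ, ((E t).card : ℝ) ≤ 2*R+4 := by
    intro t
    rw [hEdef]
    simp only [Int.card_Icc]
    rcases le_or_gt (⌊t + (R+1)⌋ + 1 - ⌈t - (R+1)⌉) 0 with h | h
    · rw [Int.toNat_of_nonpos h]; push_cast; linarith
    · have heq2 : ((⌊t + (R+1)⌋ + 1 - ⌈t - (R+1)⌉).toNat : ℝ)
          = ((⌊t + (R+1)⌋ : ℝ) + 1 - (⌈t - (R+1)⌉ : ℝ)) := by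
        rw [← Int.cast_natCast, Int.toNat_of_nonneg h.le]; push_cast; ring
      rw [heq2]
      have h1 : (⌊t + (R+1)⌋ : ℝ) ≤ t + (R+1) := Int.floor_le _
      have h2 : t - (R+1) ≤ (⌈t - (R+1)⌉ : ℝ) := Int.le_ceil _
      linarith
  -- membership bounds
  have hmemE : ∀ t : ℝ, ∀ j ∈ E t, t - (R+1) ≤ (j:ℝ) ∧ (j:ℝ) ≤ t + (R+1) := by
    intro t j hj
    rw [hEdef, Finset.mem_Icc] at hj
    exact ⟨Int.ceil_le.mp hj.1, Int.le_floor.mp hj.2⟩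
  -- moment identities
  have hS0 : ∀ t : ℝ, ∑ j ∈ E t, Φ (t - j) = 0 := by
    intro t
    have h := aux_sum φ hsm R hφ0 hexact 0 (by norm_num) t
    simpa using h
  have hS1 : ∀ t : ℝ, ∑ j ∈ E t, (j:ℝ) * Φ (t - j) = 0 := by
    intro t
    have h := aux_sum φ hsm R hφ0 hexact 1 (by norm_num) t
    simpa using h
  have hS2 : ∀ t : ℝ, ∑ j ∈ E t, (j:ℝ)^2 * Φ (t - j) = 2 := by
    intro t
    have h := aux_sum φ hsm R hφ0 hexact 2 (by norm_num) t
    have h2 : deriv (deriv (fun x : ℝ => x^2)) t = 2 := by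
      have : deriv (fun x : ℝ => x^2) = fun x : ℝ => 2*x := by
        funext x; simp [deriv_pow]
      rw [this, deriv_const_mul _ differentiableAt_id]
      simp
    rw [h2] at h
    exact h
  have hT1 : ∀ t : ℝ, ∑ j ∈ E t, ((j:ℝ) - t) * Φ (t - j) = 0 := by
    intro t
    have : ∀ j ∈ E t, ((j:ℝ) - t) * Φ (t - j) = (j:ℝ) * Φ (t - j) - t * Φ (t - j) := by
      intros; ring
    rw [Finset.sum_congr rfl this, Finset.sum_sub_distrib, ← Finset.mul_sum, hS0, hS1]
    ring
  have hT2 : ∀ t : ℝ, ∑ j ∈ E t, ((j:ℝ) - t)^2 * Φ (t - j) = 2 := by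
    intro t
    have : ∀ j ∈ E t, ((j:ℝ) - t)^2 * Φ (t - j)
        = ((j:ℝ)^2 * Φ (t - j) - (2*t) * ((j:ℝ) * Φ (t - j))) + (t^2) * Φ (t - j) := by
      intros; ring
    rw [Finset.sum_congr rfl this, Finset.sum_add_distrib, Finset.sum_sub_distrib,
      ← Finset.mul_sum, ← Finset.mul_sum, hS0, hS1, hS2]
    ring
  -- the constant
  set N : ℝ := 2*R+4 with hNdef
  have hN0 : 0 < N := by rw [hNdef]; linarith
  set CA : ℝ := N * M * Real.sqrt (3*R+5) * (Real.sqrt (2*R+4))^3 with hCAdef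
  set CB : ℝ := 1/4 + N * M * ((3/8) * (R+1)^3) with hCBdef
  have hCA0 : 0 ≤ CA := by
    rw [hCAdef]
    have := Real.sqrt_nonneg (3*R+5)
    have := Real.sqrt_nonneg (2*R+4)
    positivity
  have hCB0 : 0 ≤ CB := by
    rw [hCBdef]
    have h1 : (0:ℝ) ≤ N * M * ((3/8) * (R+1)^3) :=
      mul_nonneg (mul_nonneg hN0.le hM0) (by positivity)
    linarith
  refine ⟨CA + CB + 1, by linarith, ?_⟩
  intro t p hd1
  set d : ℝ := t - p with hddef
  have hd0 : 0 < d := by linarith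
  set s : ℝ := Real.sqrt d with hsdef
  have hs0 : 0 < s := Real.sqrt_pos.mpr hd0
  have hs1 : 1 ≤ s := by
    rw [hsdef]; rw [show (1:ℝ) = Real.sqrt 1 from (Real.sqrt_one).symm]
    exact Real.sqrt_le_sqrt hd1
  have hrpow : d ^ (-(3:ℝ)/2) = (s^3)⁻¹ := aux_rpow d hd0
  rw [hrpow]
  rcases le_or_gt d (2*R+4) with hcase | hcase
  · -- Case A : 1 ≤ d ≤ 2R+4, trivial bound
    have hbound : |ψ t p| ≤ N * M * Real.sqrt (3*R+5) := by
      rw [hψfin]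
      calc |∑ j ∈ E t, Φ (t - j) * Real.sqrt (max ((j:ℝ) - p) 0)|
          ≤ ∑ j ∈ E t, |Φ (t - j) * Real.sqrt (max ((j:ℝ) - p) 0)| :=
            Finset.abs_sum_le_sum_abs _ _
        _ ≤ ∑ j ∈ E t, M * Real.sqrt (3*R+5) := by
            apply Finset.sum_le_sum
            intro j hj
            rw [abs_mul, abs_of_nonneg (Real.sqrt_nonneg _)]
            have hsq : Real.sqrt (max ((j:ℝ) - p) 0) ≤ Real.sqrt (3*R+5) := by
              apply Real.sqrt_le_sqrt
              have := (hmemE t j hj).2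
              have : (j:ℝ) - p ≤ 3*R+5 := by linarith
              exact max_le this (by linarith)
            exact mul_le_mul (hM' _) hsq (Real.sqrt_nonneg _) hM0
        _ = ((E t).card : ℝ) * (M * Real.sqrt (3*R+5)) := by
            rw [Finset.sum_const, nsmul_eq_mul]
        _ ≤ N * (M * Real.sqrt (3*R+5)) := by
            apply mul_le_mul_of_nonneg_right (hcard t)
            positivity
        _ = N * M * Real.sqrt (3*R+5) := by ring
    have hs3 : s^3 ≤ (Real.sqrt (2*R+4))^3 := by
      apply pow_le_pow_left₀ (Real.sqrt_nonneg _)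
      exact Real.sqrt_le_sqrt hcase
    have hprod : |ψ t p| * s^3 ≤ CA + CB + 1 := by
      calc |ψ t p| * s^3 ≤ (N * M * Real.sqrt (3*R+5)) * (Real.sqrt (2*R+4))^3 := by
            apply mul_le_mul hbound hs3 (by positivity) ?_
            have := Real.sqrt_nonneg (3*R+5)
            positivity
        _ = CA := by rw [hCAdef]
        _ ≤ CA + CB + 1 := by linarith
    rw [← div_eq_mul_inv, le_div_iff₀ (by positivity)]
    exact hprod
  · -- Case B : d > 2R+4
    have hjp : ∀ j ∈ E t, 0 < d + ((j:ℝ) - t) := by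
      intro j hj; have := (hmemE t j hj).1; linarith
    set q : ℤ → ℝ := fun j => s + ((j:ℝ)-t)/(2*s) - ((j:ℝ)-t)^2/(8*s^3) with hqdef
    have hsplit : ψ t p = (∑ j ∈ E t, Φ (t - j) * q j)
        + ∑ j ∈ E t, Φ (t - j) * (Real.sqrt (d + ((j:ℝ)-t)) - q j) := by
      rw [hψfin, ← Finset.sum_add_distrib]
      apply Finset.sum_congr rfl
      intro j hj
      rw [show max ((j:ℝ) - p) 0 = d + ((j:ℝ)-t) by
        rw [show (j:ℝ) - p = d + ((j:ℝ)-t) by rw [hddef]; ring]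
        exact max_eq_left (hjp j hj).le]
      ring
    have hmain : ∑ j ∈ E t, Φ (t - j) * q j = -(1/(4*s^3)) := by
      have hrw : ∀ j ∈ E t, Φ (t - j) * q j
          = (s * Φ (t - j) + (1/(2*s)) * (((j:ℝ)-t) * Φ (t - j)))
            - (1/(8*s^3)) * (((j:ℝ)-t)^2 * Φ (t - j)) := by
        intro j _
        rw [hqdef]
        ring
      rw [Finset.sum_congr rfl hrw, Finset.sum_sub_distrib, Finset.sum_add_distrib,
        ← Finset.mul_sum, ← Finset.mul_sum, ← Finset.mul_sum, hS0, hT1, hT2]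
      ring
    have herr : |∑ j ∈ E t, Φ (t - j) * (Real.sqrt (d + ((j:ℝ)-t)) - q j)|
        ≤ N * (M * ((3/8) * (R+1)^3 / s^5)) := by
      calc |∑ j ∈ E t, Φ (t - j) * (Real.sqrt (d + ((j:ℝ)-t)) - q j)|
          ≤ ∑ j ∈ E t, |Φ (t - j) * (Real.sqrt (d + ((j:ℝ)-t)) - q j)| :=
            Finset.abs_sum_le_sum_abs _ _
        _ ≤ ∑ j ∈ E t, M * ((3/8) * (R+1)^3 / s^5) := by
            apply Finset.sum_le_sum
            intro j hj
            rw [abs_mul]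
            have hrem : |Real.sqrt (d + ((j:ℝ)-t)) - q j| ≤ (3/8) * (R+1)^3 / s^5 := by
              have h1 := aux_remainder d ((j:ℝ)-t) hd0 (hjp j hj)
              rw [← hsdef] at h1
              refine le_trans h1 ?_
              have hu : |(j:ℝ)-t| ≤ R+1 := by
                have h2 := (hmemE t j hj).1
                have h3 := (hmemE t j hj).2
                rw [abs_le]; constructor <;> linarith
              gcongr
            exact mul_le_mul (hM' _) hrem (abs_nonneg _) hM0
        _ = ((E t).card : ℝ) * (M * ((3/8) * (R+1)^3 / s^5)) := by
            rw [Finset.sum_const, nsmul_eq_mul]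
        _ ≤ N * (M * ((3/8) * (R+1)^3 / s^5)) := by
            apply mul_le_mul_of_nonneg_right (hcard t)
            positivity
    have htotal : |ψ t p| ≤ 1/(4*s^3) + N * (M * ((3/8) * (R+1)^3 / s^5)) := by
      rw [hsplit, hmain]
      refine le_trans (abs_add_le _ _) ?_
      have habs : |(-(1/(4*s^3)))| = 1/(4*s^3) := by
        rw [abs_neg, abs_of_pos]; positivity
      rw [habs]
      linarith [herr]
    have hs35 : s^3 ≤ s^5 := pow_le_pow_right₀ hs1 (by norm_num)
    have h5 : N * (M * ((3/8) * (R+1)^3 / s^5)) ≤ N * (M * ((3/8) * (R+1)^3 / s^3)) := by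
      apply mul_le_mul_of_nonneg_left ?_ hN0.le
      apply mul_le_mul_of_nonneg_left ?_ hM0
      apply div_le_div_of_nonneg_left (by positivity) (by positivity) hs35
    have hfin : 1/(4*s^3) + N * (M * ((3/8) * (R+1)^3 / s^3)) = CB * (s^3)⁻¹ := by
      rw [hCBdef]
      field_simp
    have hle : CB * (s^3)⁻¹ ≤ (CA + CB + 1) * (s^3)⁻¹ := by
      apply mul_le_mul_of_nonneg_right (by linarith) (by positivity)
    linarith
end

section
/- For a compactly supported continuously differentiable function φ: ℝ → ℝ, one has lim_{A→∞} [ ∫_{−∞}^{A²} φ'(h+r)·( log((A²−r)^{1/2} + A) − (1/2)log|r| ) dr ] = (1/2) · p.v. ∫_ℝ φ(h+r)/r dr, for every h ∈ ℝ, where the last integral is the principal value. -/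
open MeasureTheory Filter Set Topology

/-- `log` is integrable on `(0,1]`. -/
lemma integrableOn_log_Ioc01' : IntegrableOn Real.log (Ioc (0:ℝ) 1) := by
  have hg : ∀ x ∈ Ioo (0:ℝ) 1, HasDerivAt (fun x => x - x * Real.log x) (-Real.log x) x := by
    intro x hx
    have h : HasDerivAt (fun x => x - x * Real.log x) (1 - (Real.log x + 1)) x :=
      (hasDerivAt_id x).sub (Real.hasDerivAt_mul_log hx.1.ne')
    convert h using 1
    ring
  have hc : ContinuousOn (fun x : ℝ => x - x * Real.log x) (Icc (0:ℝ) 1) :=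
    (continuous_id.sub Real.continuous_mul_log).continuousOn
  have hnn : ∀ x ∈ Ioo (0:ℝ) 1, 0 ≤ -Real.log x := by
    intro x hx
    simp only [neg_nonneg]
    exact Real.log_nonpos hx.1.le hx.2.le
  have h := intervalIntegral.integrableOn_deriv_of_nonneg hc hg hnn
  exact h.neg.congr (Filter.Eventually.of_forall fun x => by simp)

/-- `log` is locally integrable on `ℝ`. -/
lemma locallyIntegrable_log' : LocallyIntegrable Real.log (volume : Measure ℝ) := by
  rw [locallyIntegrable_iff]
  intro K hK
  obtain ⟨B0, hB0⟩ := hK.isBounded.subset_closedBall 0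
  set B : ℝ := max B0 0 + 1 with hB
  have hB1 : (1:ℝ) ≤ B := by have : (0:ℝ) ≤ max B0 0 := le_max_right _ _; simp only [hB]; linarith
  have hpos : IntegrableOn Real.log (Ioc (0:ℝ) B) := by
    have h2 : IntegrableOn Real.log (Ioc (1:ℝ) B) := by
      have : ContinuousOn Real.log (Icc (1:ℝ) B) :=
        Real.continuousOn_log.mono (fun x hx => by
          simp only [mem_compl_iff, mem_singleton_iff]
          exact (by linarith [hx.1] : (0:ℝ) < x).ne')
      exact this.integrableOn_Icc.mono_set Ioc_subset_Icc_self
    have hun : Ioc (0:ℝ) 1 ∪ Ioc (1:ℝ) B = Ioc (0:ℝ) B :=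
      Ioc_union_Ioc_eq_Ioc (by norm_num) hB1
    rw [← hun]
    exact integrableOn_log_Ioc01'.union h2
  have hII : IntervalIntegrable Real.log volume 0 B :=
    (intervalIntegrable_iff_integrableOn_Ioc_of_le (by linarith)).2 hpos
  have hneg : IntervalIntegrable Real.log volume (-B) 0 := by
    have := (IntervalIntegrable.iff_comp_neg (f := Real.log) (by simp)).mp hII
    have heq : (fun x : ℝ => Real.log (-x)) = Real.log := funext fun x => Real.log_neg_eq_log x
    rw [heq] at this
    simpa using this.symm
  have hfull : IntervalIntegrable Real.log volume (-B) B := hneg.trans hII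
  have : IntegrableOn Real.log (Ioc (-B) B) :=
    (intervalIntegrable_iff_integrableOn_Ioc_of_le (by linarith)).1 hfull
  apply this.mono_set
  intro x hx
  have := hB0 hx
  rw [Metric.mem_closedBall, Real.dist_eq, sub_zero] at this
  have h2 := abs_le.1 this
  have hB0B : B0 < B := by
    have : B0 ≤ max B0 0 := le_max_left _ _
    simp only [hB]; linarith
  exact ⟨by linarith [h2.1], by linarith [h2.2]⟩


/-- The limit as `A → ∞` of `∫_{-∞}^{A²} φ'(h+r)(log(√(A²-r)+A) - ½ log|r|) dr`
equals one half of the principal value integral `p.v. ∫ φ(h+r)/r dr`. -/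
theorem stmt_5 (φ : ℝ → ℝ) (hsm : ContDiff ℝ 1 φ) (hsupp : HasCompactSupport φ) :
    ∀ h : ℝ, ∃ L : ℝ,
      Tendsto (fun δ : ℝ => ∫ r in {r : ℝ | δ < |r|}, φ (h + r) / r)
        (nhdsWithin 0 (Ioi 0)) (nhds L) ∧
      Tendsto (fun A : ℝ =>
          ∫ r in Iic (A ^ 2),
            deriv φ (h + r) * (Real.log (Real.sqrt (A ^ 2 - r) + A) - (1/2) * Real.log |r|))
        atTop (nhds (L / 2)) := by
  intro h
  set F : ℝ → ℝ := fun r => φ (h + r) with hFdef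
  set F' : ℝ → ℝ := fun r => deriv φ (h + r) with hF'def
  have hFc : ContDiff ℝ 1 F := hsm.comp (contDiff_const.add contDiff_id)
  have hFs : HasCompactSupport F := by
    have : F = φ ∘ (Homeomorph.addLeft h) := rfl
    rw [this]
    exact hsupp.comp_homeomorph _
  have hder : ∀ r, HasDerivAt F (F' r) r := by
    intro r
    have h1 : HasDerivAt (fun r : ℝ => h + r) 1 r := by
      simpa using (hasDerivAt_id r).const_add h
    have h2 : HasDerivAt φ (deriv φ (h + r)) (h + r) :=
      ((hsm.differentiable one_ne_zero) (h + r)).hasDerivAt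
    exact (h2.comp r h1).congr_deriv (mul_one _)
  have hderiv_eq : deriv F = F' := funext fun r => (hder r).deriv
  have hF'c : Continuous F' := by
    have : Continuous (deriv φ) := hsm.continuous_deriv le_rfl
    exact this.comp (continuous_const.add continuous_id)
  have hF's : HasCompactSupport F' := by
    rw [← hderiv_eq]
    exact hFs.deriv
  -- the bound M on supports
  obtain ⟨M1, hM1⟩ := hFs.isBounded.subset_closedBall 0
  obtain ⟨M2, hM2⟩ := hF's.isBounded.subset_closedBall 0
  set M : ℝ := max (max M1 M2) 0 + 1 with hMdef
  have hM1M : M1 < M := by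
    have : M1 ≤ max (max M1 M2) 0 := le_trans (le_max_left _ _) (le_max_left _ _)
    simp only [hMdef]; linarith
  have hM2M : M2 < M := by
    have : M2 ≤ max (max M1 M2) 0 := le_trans (le_max_right _ _) (le_max_left _ _)
    simp only [hMdef]; linarith
  have hMpos : (1:ℝ) ≤ M := by
    have : (0:ℝ) ≤ max (max M1 M2) 0 := le_max_right _ _
    simp only [hMdef]; linarith
  have hM : ∀ r : ℝ, M ≤ |r| → F r = 0 ∧ F' r = 0 := by
    intro r hr
    constructor
    · apply image_eq_zero_of_notMem_tsupport
      intro hmem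
      have := hM1 hmem
      rw [Metric.mem_closedBall, Real.dist_eq, sub_zero] at this
      linarith
    · apply image_eq_zero_of_notMem_tsupport
      intro hmem
      have := hM2 hmem
      rw [Metric.mem_closedBall, Real.dist_eq, sub_zero] at this
      linarith
  -- integrability facts
  have intF' : Integrable F' := hF'c.integrable_of_hasCompactSupport hF's
  have intF'log : Integrable (fun r => F' r * Real.log r) := by
    have := locallyIntegrable_log'.integrable_smul_left_of_hasCompactSupport hF'c hF's
    simpa [smul_eq_mul] using this
  have ae0 : ∀ᵐ r : ℝ, r ≠ (0:ℝ) := by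
    rw [ae_iff]
    simpa using Real.volume_singleton
  refine ⟨-(∫ r, F' r * Real.log r), ?_, ?_⟩
  · -- Part 1 : the principal value
    have hSmeas : ∀ δ : ℝ, MeasurableSet {r : ℝ | δ < |r|} := fun δ =>
      (isOpen_lt continuous_const continuous_abs).measurableSet
    have hSeq : ∀ δ : ℝ, {r : ℝ | δ < |r|} = Iio (-δ) ∪ Ioi δ := by
      intro δ
      ext r
      simp only [mem_setOf_eq, lt_abs, mem_union, mem_Iio, mem_Ioi, lt_neg]
      tauto
    have intW_Ioi : ∀ δ : ℝ, 0 < δ → IntegrableOn (fun r => F r * r⁻¹) (Ioi δ) := by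
      intro δ hδ
      have h1 : IntegrableOn (fun r => F r * r⁻¹) (Ioc δ M) := by
        apply ContinuousOn.integrableOn_Icc ?_ |>.mono_set Ioc_subset_Icc_self
        apply (hFc.continuous.continuousOn).mul
        apply ContinuousOn.inv₀ continuousOn_id
        intro x hx
        exact (hδ.trans_le hx.1).ne'
      have h2 : IntegrableOn (fun r => F r * r⁻¹) (Ioi M) := by
        have hz : IntegrableOn (fun _ : ℝ => (0:ℝ)) (Ioi M) volume := integrableOn_zero
        apply hz.congr_fun ?_ measurableSet_Ioi
        intro r hr
        have hF0 := (hM r (le_trans (le_of_lt hr) (le_abs_self r))).1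
        simp [hF0]
      refine ((h1.union h2).mono_set ?_)
      intro r hr
      rcases le_or_gt r M with h' | h'
      · exact Or.inl ⟨hr, h'⟩
      · exact Or.inr h'
    have intW_Iic : ∀ δ : ℝ, 0 < δ → IntegrableOn (fun r => F r * r⁻¹) (Iic (-δ)) := by
      intro δ hδ
      have h1 : IntegrableOn (fun r => F r * r⁻¹) (Icc (-M) (-δ)) := by
        apply ContinuousOn.integrableOn_Icc
        apply (hFc.continuous.continuousOn).mul
        apply ContinuousOn.inv₀ continuousOn_id
        intro x hx
        have : x ≤ -δ := hx.2
        exact (lt_of_le_of_lt this (by linarith)).ne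
      have h2 : IntegrableOn (fun r => F r * r⁻¹) (Iio (-M)) := by
        have hz : IntegrableOn (fun _ : ℝ => (0:ℝ)) (Iio (-M)) volume := integrableOn_zero
        apply hz.congr_fun ?_ measurableSet_Iio
        intro r hr
        have hr' : M ≤ |r| := by
          rw [abs_of_nonpos (by linarith [mem_Iio.1 hr] : r ≤ 0)]
          linarith [mem_Iio.1 hr]
        have hF0 := (hM r hr').1
        simp [hF0]
      refine ((h2.union h1).mono_set ?_)
      intro r hr
      rcases lt_or_ge r (-M) with h' | h'
      · exact Or.inl h'
      · exact Or.inr ⟨h', hr⟩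
    have keyIoi : ∀ δ : ℝ, 0 < δ →
        ∫ r in Ioi δ, (F' r * Real.log r + F r * r⁻¹) = -(F δ * Real.log δ) := by
      intro δ hδ
      have h0 : ∀ x ∈ Ioi δ, HasDerivAt (fun r => F r * Real.log r)
          (F' x * Real.log x + F x * x⁻¹) x := fun x hx =>
        (hder x).mul (Real.hasDerivAt_log (hδ.trans hx).ne')
      have hcont : ContinuousWithinAt (fun r => F r * Real.log r) (Ici δ) δ :=
        (((hder δ).continuousAt).mul (Real.continuousAt_log hδ.ne')).continuousWithinAt
      have hint : IntegrableOn (fun x => F' x * Real.log x + F x * x⁻¹) (Ioi δ) :=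
        (intF'log.integrableOn).add (intW_Ioi δ hδ)
      have htend : Tendsto (fun r => F r * Real.log r) atTop (𝓝 0) := by
        apply Tendsto.congr' ?_ (tendsto_const_nhds (x := (0:ℝ)))
        filter_upwards [eventually_ge_atTop M] with r hr
        have := (hM r (le_trans hr (le_abs_self r))).1
        simp [this]
      have := integral_Ioi_of_hasDerivAt_of_tendsto hcont h0 hint htend
      simpa using this
    have keyIic : ∀ δ : ℝ, 0 < δ →
        ∫ r in Iic (-δ), (F' r * Real.log r + F r * r⁻¹) = F (-δ) * Real.log δ := by
      intro δ hδ
      have h0 : ∀ x ∈ Iio (-δ), HasDerivAt (fun r => F r * Real.log r)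
          (F' x * Real.log x + F x * x⁻¹) x := by
        intro x hx
        have hx0 : x ≠ 0 := by
          have : x < -δ := hx
          exact (this.trans (by linarith)).ne
        exact (hder x).mul (Real.hasDerivAt_log hx0)
      have hcont : ContinuousWithinAt (fun r => F r * Real.log r) (Iic (-δ)) (-δ) := by
        have hne : (-δ : ℝ) ≠ 0 := by simp [hδ.ne']
        exact (((hder (-δ)).continuousAt).mul (Real.continuousAt_log hne)).continuousWithinAt
      have hint : IntegrableOn (fun x => F' x * Real.log x + F x * x⁻¹) (Iic (-δ)) :=
        (intF'log.integrableOn).add (intW_Iic δ hδ)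
      have htend : Tendsto (fun r => F r * Real.log r) atBot (𝓝 0) := by
        apply Tendsto.congr' ?_ (tendsto_const_nhds (x := (0:ℝ)))
        filter_upwards [eventually_le_atBot (-M)] with r hr
        have hr' : M ≤ |r| := by
          rw [abs_of_nonpos (by linarith : r ≤ 0)]
          linarith
        have := (hM r hr').1
        simp [this]
      have := integral_Iic_of_hasDerivAt_of_tendsto hcont h0 hint htend
      rw [this, Real.log_neg_eq_log, sub_zero]
    have main_eq : ∀ δ : ℝ, 0 < δ →
        (∫ r in {r : ℝ | δ < |r|}, F r / r) =
          (F (-δ) - F δ) * Real.log δ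
            - ∫ r, Set.indicator {r : ℝ | δ < |r|} (fun r => F' r * Real.log r) r := by
      intro δ hδ
      have hdisj : Disjoint (Iio (-δ)) (Ioi δ) :=
        (Iio_disjoint_Ici (by linarith)).mono_right Ioi_subset_Ici_self
      have e1 : ∫ r in Ioi δ, F r * r⁻¹
          = -(F δ * Real.log δ) - ∫ r in Ioi δ, F' r * Real.log r := by
        have hk := keyIoi δ hδ
        rw [integral_add (intF'log.integrableOn) (intW_Ioi δ hδ)] at hk
        linarith
      have e2 : ∫ r in Iio (-δ), F r * r⁻¹
          = F (-δ) * Real.log δ - ∫ r in Iio (-δ), F' r * Real.log r := by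
        have hk := keyIic δ hδ
        rw [integral_add (intF'log.integrableOn) (intW_Iic δ hδ)] at hk
        have i1 : ∫ r in Iio (-δ), F r * r⁻¹ = ∫ r in Iic (-δ), F r * r⁻¹ :=
          setIntegral_congr_set Iio_ae_eq_Iic
        have i2 : ∫ r in Iio (-δ), F' r * Real.log r = ∫ r in Iic (-δ), F' r * Real.log r :=
          setIntegral_congr_set Iio_ae_eq_Iic
        rw [i1, i2]
        linarith
      simp only [div_eq_mul_inv]
      rw [integral_indicator (hSmeas δ), hSeq δ]
      rw [setIntegral_union hdisj measurableSet_Ioi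
        ((intW_Iic δ hδ).mono_set Iio_subset_Iic_self) (intW_Ioi δ hδ)]
      rw [setIntegral_union hdisj measurableSet_Ioi
        (intF'log.integrableOn) (intF'log.integrableOn)]
      rw [e1, e2]
      ring
    obtain ⟨C, hC⟩ := ContDiff.lipschitzWith_of_hasCompactSupport hsupp hsm one_ne_zero
    have tA : Tendsto (fun δ : ℝ => (F (-δ) - F δ) * Real.log δ) (𝓝[>] (0:ℝ)) (𝓝 0) := by
      have hg : Tendsto (fun δ : ℝ => ((C:ℝ) * 2) * ‖Real.log δ * δ‖) (𝓝[>] (0:ℝ)) (𝓝 0) := by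
        have h1 : Tendsto (fun x : ℝ => Real.log x * x) (𝓝[>] (0:ℝ)) (𝓝 0) := by
          have := tendsto_log_mul_rpow_nhdsGT_zero one_pos
          simpa [Real.rpow_one] using this
        have h2 := (h1.norm).const_mul ((C:ℝ) * 2)
        simpa using h2
      apply squeeze_zero_norm' ?_ hg
      filter_upwards [self_mem_nhdsWithin] with δ (hδ : (0:ℝ) < δ)
      have h1 := hC.dist_le_mul (h + -δ) (h + δ)
      rw [Real.dist_eq, Real.dist_eq] at h1
      have h2 : |(h + -δ) - (h + δ)| = 2 * δ := by
        rw [show (h + -δ) - (h + δ) = -(2*δ) by ring, abs_neg, abs_of_nonneg (by linarith)]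
      rw [h2] at h1
      have h3 : ‖(F (-δ) - F δ) * Real.log δ‖ = |φ (h + -δ) - φ (h + δ)| * |Real.log δ| := by
        rw [Real.norm_eq_abs, abs_mul]
      rw [h3]
      have h4 : ‖Real.log δ * δ‖ = |Real.log δ| * δ := by
        rw [Real.norm_eq_abs, abs_mul, abs_of_pos hδ]
      rw [h4]
      calc |φ (h + -δ) - φ (h + δ)| * |Real.log δ|
          ≤ ((C:ℝ) * (2 * δ)) * |Real.log δ| :=
            mul_le_mul_of_nonneg_right h1 (abs_nonneg _)
        _ = (C:ℝ) * 2 * (|Real.log δ| * δ) := by ring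
    have tB : Tendsto (fun δ : ℝ =>
        ∫ r, Set.indicator {r : ℝ | δ < |r|} (fun r => F' r * Real.log r) r)
        (𝓝[>] (0:ℝ)) (𝓝 (∫ r, F' r * Real.log r)) := by
      apply tendsto_integral_filter_of_dominated_convergence
        (fun r => ‖F' r * Real.log r‖)
      · apply Eventually.of_forall
        intro δ
        exact (intF'log.aestronglyMeasurable).indicator (hSmeas δ)
      · apply Eventually.of_forall
        intro δ
        apply Eventually.of_forall
        intro r
        exact norm_indicator_le_norm_self (fun r => F' r * Real.log r) r
      · exact intF'log.norm
      · filter_upwards [ae0] with r hr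
        apply Tendsto.congr' ?_ (tendsto_const_nhds (x := F' r * Real.log r))
        filter_upwards [Ioo_mem_nhdsGT_of_mem ⟨le_refl (0:ℝ), abs_pos.2 hr⟩] with δ hδ
        exact (Set.indicator_of_mem (show r ∈ {r : ℝ | δ < |r|} from hδ.2) (fun r => F' r * Real.log r)).symm
    have hcomb := tA.sub tB
    rw [zero_sub] at hcomb
    apply Tendsto.congr' ?_ hcomb
    filter_upwards [self_mem_nhdsWithin] with δ (hδ : (0:ℝ) < δ)
    exact (main_eq δ hδ).symm
  · -- Part 2
    simp only [Real.log_abs]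
    set u : ℝ → ℝ → ℝ := fun A r =>
      F' r * (Real.log ((Real.sqrt (A^2 - r) + A) / (2*A)) - 1/2 * Real.log r) with hudef
    have contlog : ∀ A : ℝ, 0 < A →
        Continuous (fun r : ℝ => Real.log (Real.sqrt (A^2 - r) + A)) := by
      intro A hA
      apply Continuous.log
      · exact (Real.continuous_sqrt.comp (continuous_const.sub continuous_id)).add continuous_const
      · intro r
        exact (add_pos_of_nonneg_of_pos (Real.sqrt_nonneg _) hA).ne'
    have intLogSqrt : ∀ A : ℝ, 0 < A →
        Integrable (fun r => F' r * Real.log (Real.sqrt (A^2 - r) + A)) := by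
      intro A hA
      apply (hF'c.mul (contlog A hA)).integrable_of_hasCompactSupport
      exact hF's.mul_right
    have intu : ∀ A : ℝ, 0 < A → Integrable (u A) := by
      intro A hA
      have hrepr : u A = fun r => (F' r * Real.log (Real.sqrt (A^2 - r) + A)
          - F' r * Real.log (2*A)) - 1/2 * (F' r * Real.log r) := by
        funext r
        have hpos : 0 < Real.sqrt (A^2 - r) + A :=
          add_pos_of_nonneg_of_pos (Real.sqrt_nonneg _) hA
        simp only [hudef]
        rw [Real.log_div hpos.ne' (by positivity)]
        ring
      rw [hrepr]
      exact ((intLogSqrt A hA).sub (intF'.mul_const _)).sub (intF'log.const_mul _)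
    have ev_eq : ∀ᶠ A : ℝ in atTop,
        (∫ r in Iic (A^2),
            F' r * (Real.log (Real.sqrt (A^2 - r) + A) - 1/2 * Real.log r))
          = ∫ r, Set.indicator (Iic (A^2)) (u A) r := by
      filter_upwards [eventually_ge_atTop (max 1 (M+1))] with A hA
      have hA1 : (1:ℝ) ≤ A := le_trans (le_max_left _ _) hA
      have hA0 : (0:ℝ) < A := lt_of_lt_of_le one_pos hA1
      have hAM : M + 1 ≤ A^2 := by nlinarith [le_trans (le_max_right _ _) hA]
      rw [integral_indicator measurableSet_Iic]
      have split : ∀ r : ℝ,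
          F' r * (Real.log (Real.sqrt (A^2 - r) + A) - 1/2 * Real.log r)
            = u A r + F' r * Real.log (2*A) := by
        intro r
        have hpos : 0 < Real.sqrt (A^2 - r) + A :=
          add_pos_of_nonneg_of_pos (Real.sqrt_nonneg _) hA0
        simp only [hudef]
        rw [Real.log_div hpos.ne' (by positivity)]
        ring
      simp only [split]
      rw [integral_add ((intu A hA0).integrableOn) ((intF'.mul_const _).integrableOn)]
      have hFA : ∫ r in Iic (A^2), F' r = F (A^2) := by
        rw [← hderiv_eq]
        exact HasCompactSupport.integral_Iic_deriv_eq hFc hFs (A^2)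
      have hint2 : ∫ r in Iic (A^2), F' r * Real.log (2*A)
          = (∫ r in Iic (A^2), F' r) * Real.log (2*A) := by
        rw [integral_mul_const]
      have hF0 : F (A^2) = 0 := by
        apply (hM _ ?_).1
        rw [abs_of_nonneg (by positivity)]
        linarith
      rw [hint2, hFA, hF0, zero_mul, add_zero]
    have tInd : Tendsto (fun A : ℝ => ∫ r, Set.indicator (Iic (A^2)) (u A) r) atTop
        (𝓝 (∫ r, F' r * (0 - 1/2 * Real.log r))) := by
      apply tendsto_integral_filter_of_dominated_convergence
        (fun r => ‖F' r‖ * Real.log 2 + 1/2 * ‖F' r * Real.log r‖)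
      · filter_upwards [eventually_gt_atTop (0:ℝ)] with A hA
        exact ((intu A hA).aestronglyMeasurable).indicator measurableSet_Iic
      · filter_upwards [eventually_ge_atTop (max 1 (M+1))] with A hA
        apply Eventually.of_forall
        intro r
        have hA1 : (1:ℝ) ≤ A := le_trans (le_max_left _ _) hA
        have hA0 : (0:ℝ) < A := lt_of_lt_of_le one_pos hA1
        have hAM : M + 1 ≤ A^2 := by nlinarith [le_trans (le_max_right _ _) hA]
        have key : ‖u A r‖ ≤ ‖F' r‖ * Real.log 2 + 1/2 * ‖F' r * Real.log r‖ := by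
          by_cases hr : F' r = 0
          · simp only [hudef, hr, zero_mul, norm_zero, norm_mul]
            positivity
          · have hrM : |r| ≤ M := by
              by_contra hcon
              exact hr (hM r (le_of_lt (not_le.1 hcon))).2
            have hpos : 0 < Real.sqrt (A^2 - r) + A :=
              add_pos_of_nonneg_of_pos (Real.sqrt_nonneg _) hA0
            have hratio_pos : 0 < (Real.sqrt (A^2 - r) + A) / (2*A) := by positivity
            have hlow : (1:ℝ)/2 ≤ (Real.sqrt (A^2 - r) + A) / (2*A) := by
              rw [le_div_iff₀ (by positivity)]
              have := Real.sqrt_nonneg (A^2 - r)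
              linarith
            have hhigh : (Real.sqrt (A^2 - r) + A) / (2*A) ≤ 2 := by
              rw [div_le_iff₀ (by positivity)]
              have hs : Real.sqrt (A^2 - r) ≤ 3*A := by
                rw [show (3*A : ℝ) = Real.sqrt ((3*A)^2) from
                  (Real.sqrt_sq (by positivity)).symm]
                apply Real.sqrt_le_sqrt
                nlinarith [neg_abs_le r, sq_nonneg A]
              linarith
            have hlogabs : |Real.log ((Real.sqrt (A^2 - r) + A) / (2*A))| ≤ Real.log 2 := by
              rw [abs_le]
              constructor
              · have hll := Real.log_le_log (by norm_num : (0:ℝ) < 1/2) hlow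
                rw [show Real.log (1/2 : ℝ) = -Real.log 2 by
                  rw [one_div, Real.log_inv]] at hll
                linarith
              · exact Real.log_le_log hratio_pos hhigh
            have hnorm : ‖u A r‖ = ‖F' r‖ * ‖Real.log ((Real.sqrt (A^2 - r) + A) / (2*A))
                - 1/2 * Real.log r‖ := by
              simp only [hudef]
              rw [norm_mul]
            rw [hnorm]
            calc ‖F' r‖ * ‖Real.log ((Real.sqrt (A^2 - r) + A) / (2*A)) - 1/2 * Real.log r‖
                ≤ ‖F' r‖ * (Real.log 2 + 1/2 * ‖Real.log r‖) := by
                  apply mul_le_mul_of_nonneg_left ?_ (norm_nonneg _)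
                  calc ‖Real.log ((Real.sqrt (A^2 - r) + A) / (2*A)) - 1/2 * Real.log r‖
                      ≤ ‖Real.log ((Real.sqrt (A^2 - r) + A) / (2*A))‖ + ‖1/2 * Real.log r‖ :=
                        norm_sub_le _ _
                    _ ≤ Real.log 2 + 1/2 * ‖Real.log r‖ := by
                        apply add_le_add hlogabs
                        rw [norm_mul]
                        apply mul_le_mul_of_nonneg_right ?_ (norm_nonneg _)
                        rw [Real.norm_eq_abs, abs_of_nonneg (by norm_num : (0:ℝ) ≤ 1/2)]
              _ = ‖F' r‖ * Real.log 2 + 1/2 * ‖F' r * Real.log r‖ := by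
                  rw [norm_mul]; ring
        calc ‖Set.indicator (Iic (A^2)) (u A) r‖ ≤ ‖u A r‖ :=
              norm_indicator_le_norm_self (u A) r
          _ ≤ _ := key
      · exact ((intF'.norm.mul_const _)).add ((intF'log.norm).const_mul _)
      · apply Eventually.of_forall
        intro r
        have hlog : Tendsto (fun A : ℝ =>
            Real.log ((Real.sqrt (A^2 - r) + A) / (2*A))) atTop (𝓝 0) := by
          have h2 : Tendsto (fun A : ℝ => 1 - r/A^2) atTop (𝓝 1) := by
            have h3 : Tendsto (fun A : ℝ => r / A^2) atTop (𝓝 0) :=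
              Tendsto.div_atTop tendsto_const_nhds (tendsto_pow_atTop two_ne_zero)
            simpa using (tendsto_const_nhds (x := (1:ℝ))).sub h3
          have h4 : Tendsto (fun A : ℝ => Real.sqrt (1 - r/A^2)) atTop (𝓝 1) := by
            have := (Real.continuous_sqrt.tendsto 1).comp h2
            simpa [Real.sqrt_one, Function.comp_def] using this
          have h1 : Tendsto (fun A : ℝ => (Real.sqrt (1 - r/A^2) + 1)/2) atTop (𝓝 1) := by
            have := (h4.add (tendsto_const_nhds (x := (1:ℝ)))).div_const 2
            norm_num at this
            exact this
          have h5 : (fun A : ℝ => (Real.sqrt (1 - r/A^2) + 1)/2) =ᶠ[atTop]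
              (fun A : ℝ => (Real.sqrt (A^2 - r) + A) / (2*A)) := by
            filter_upwards [eventually_gt_atTop (0:ℝ)] with A hA
            have heq : A^2 - r = A^2 * (1 - r/A^2) := by
              field_simp
            rw [heq, Real.sqrt_mul (by positivity) _, Real.sqrt_sq hA.le]
            rw [div_eq_div_iff (by norm_num : (2:ℝ) ≠ 0) (by positivity : (2*A) ≠ 0)]
            ring
          have h6 := Tendsto.congr' h5 h1
          have h7 := (Real.continuousAt_log one_ne_zero).tendsto.comp h6
          simpa [Real.log_one, Function.comp_def] using h7
        have hfin : Tendsto (fun A : ℝ => u A r) atTop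
            (𝓝 (F' r * (0 - 1/2 * Real.log r))) := by
          exact (hlog.sub (tendsto_const_nhds (x := 1/2 * Real.log r))).const_mul (F' r)
        apply Tendsto.congr' ?_ hfin
        filter_upwards [eventually_ge_atTop (max 1 |r|)] with A hA
        have hA1 : (1:ℝ) ≤ A := le_trans (le_max_left _ _) hA
        have hAr : |r| ≤ A := le_trans (le_max_right _ _) hA
        have hmem : r ∈ Iic (A^2) := by
          simp only [mem_Iic]
          nlinarith [le_abs_self r]
        exact (Set.indicator_of_mem hmem (u A)).symm
    have hlim_eq : ∫ r, F' r * (0 - 1/2 * Real.log r)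
        = (-(∫ r, F' r * Real.log r)) / 2 := by
      have hfe : (fun r => F' r * (0 - 1/2 * Real.log r))
          = fun r => (-(1/2)) * (F' r * Real.log r) := funext fun r => by ring
      rw [hfe, integral_const_mul]
      ring
    rw [show (-(∫ r, F' r * Real.log r)) / 2 = ∫ r, F' r * (0 - 1/2 * Real.log r) from hlim_eq.symm]
    exact Tendsto.congr' (by filter_upwards [ev_eq] with A hA; exact hA.symm) tInd
end

section
/- Let K: ℝ → ℝ be measurable with |K(t)| ≤ C/(1+|t|^{β+1}) for some β > s − 1 > 0, and A(t) := a_+ t_+^{s−1} + a_− t_−^{s−1}. Define ψ(t,p) := ∑_{j∈ℤ} K(t−j)A(j−p) and Ψ(u) := ∫_ℝ K(u−r)A(r) dr. Then for all t, p ∈ ℝ, ∫_0^1 ψ(t+r, p+r) dr = Ψ(t−p). -/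
open MeasureTheory

private lemma aux_K_bound (β C : ℝ) (hβ : 1 ≤ β) (K : ℝ → ℝ)
    (hK : ∀ t : ℝ, |K t| ≤ C / (1 + |t| ^ (β + 1))) (hC : 0 ≤ C) (w : ℝ) :
    |K w| ≤ C * 2 ^ (β + 1) * (1 + |w|) ^ (-(β + 1)) := by
  have hβ1 : (0:ℝ) < β + 1 := by linarith
  have hw : (0:ℝ) ≤ |w| := abs_nonneg w
  have hrn : (0:ℝ) ≤ |w| ^ (β + 1) := Real.rpow_nonneg hw _
  have h1 : (1 + |w|) ^ (β + 1) ≤ 2 ^ (β + 1) * (1 + |w| ^ (β + 1)) := by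
    have h2 : 1 + |w| ≤ 2 * max 1 |w| := by
      rcases le_total |w| 1 with h | h
      · have := le_max_left (1:ℝ) |w|; linarith
      · have := le_max_right (1:ℝ) |w|; linarith
    calc (1 + |w|) ^ (β + 1) ≤ (2 * max 1 |w|) ^ (β + 1) :=
          Real.rpow_le_rpow (by positivity) h2 hβ1.le
      _ = 2 ^ (β + 1) * (max 1 |w|) ^ (β + 1) :=
          Real.mul_rpow (by norm_num) (le_max_of_le_left zero_le_one)
      _ ≤ 2 ^ (β + 1) * (1 + |w| ^ (β + 1)) := by
          have : (max 1 |w|) ^ (β + 1) ≤ 1 + |w| ^ (β + 1) := by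
            rcases le_total 1 |w| with h | h
            · rw [max_eq_right h]; linarith
            · rw [max_eq_left h, Real.one_rpow]; linarith
          have h2p : (0:ℝ) ≤ 2 ^ (β + 1) := Real.rpow_nonneg (by norm_num) _
          nlinarith
  have hden : (0:ℝ) < 1 + |w| ^ (β + 1) := by linarith
  have hden2 : (0:ℝ) < (1 + |w|) ^ (β + 1) := Real.rpow_pos_of_pos (by linarith) _
  have h2p : (0:ℝ) < 2 ^ (β + 1) := Real.rpow_pos_of_pos (by norm_num) _
  calc |K w| ≤ C / (1 + |w| ^ (β + 1)) := hK w
    _ ≤ C * 2 ^ (β + 1) / (1 + |w|) ^ (β + 1) := by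
        rw [div_le_div_iff₀ hden hden2]
        nlinarith
    _ = C * 2 ^ (β + 1) * (1 + |w|) ^ (-(β + 1)) := by
        rw [Real.rpow_neg (by positivity), div_eq_mul_inv]

private lemma aux_A_bound (s aPlus aMinus : ℝ) (hs : 1 < s) (A : ℝ → ℝ)
    (hA : ∀ t : ℝ, A t = aPlus * (max t 0) ^ (s - 1) + aMinus * (max (-t) 0) ^ (s - 1))
    (v : ℝ) : |A v| ≤ (|aPlus| + |aMinus|) * (1 + |v|) ^ (s - 1) := by
  have hs1 : (0:ℝ) ≤ s - 1 := by linarith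
  have h1 : (max v 0) ^ (s - 1) ≤ (1 + |v|) ^ (s - 1) := by
    apply Real.rpow_le_rpow (le_max_right _ _) _ hs1
    have := le_abs_self v; have := abs_nonneg v
    simp only [max_le_iff]; constructor <;> linarith
  have h2 : (max (-v) 0) ^ (s - 1) ≤ (1 + |v|) ^ (s - 1) := by
    apply Real.rpow_le_rpow (le_max_right _ _) _ hs1
    have := neg_abs_le v; have := abs_nonneg v
    simp only [max_le_iff]; constructor <;> linarith
  have hp1 : (0:ℝ) ≤ (max v 0) ^ (s - 1) := Real.rpow_nonneg (le_max_right _ _) _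
  have hp2 : (0:ℝ) ≤ (max (-v) 0) ^ (s - 1) := Real.rpow_nonneg (le_max_right _ _) _
  rw [hA v]
  calc |aPlus * (max v 0) ^ (s - 1) + aMinus * (max (-v) 0) ^ (s - 1)|
      ≤ |aPlus * (max v 0) ^ (s - 1)| + |aMinus * (max (-v) 0) ^ (s - 1)| := abs_add_le _ _
    _ = |aPlus| * (max v 0) ^ (s - 1) + |aMinus| * (max (-v) 0) ^ (s - 1) := by
        rw [abs_mul, abs_mul, abs_of_nonneg hp1, abs_of_nonneg hp2]
    _ ≤ (|aPlus| + |aMinus|) * (1 + |v|) ^ (s - 1) := by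
        rw [add_mul]
        exact add_le_add (mul_le_mul_of_nonneg_left h1 (abs_nonneg _))
          (mul_le_mul_of_nonneg_left h2 (abs_nonneg _))

/-- Averaging identity `∫_0^1 ψ(t+r, p+r) dr = Ψ(t-p)` for
`ψ(t,p) = ∑_j K(t-j)A(j-p)` and `Ψ(u) = ∫ K(u-r)A(r) dr`, under the decay
condition `|K(t)| ≤ C/(1+|t|^{β+1})` with `β - s + 1 > 0`, `s > 1`. -/
theorem stmt_11 (s β C aPlus aMinus : ℝ) (hs : 1 < s) (hβ : 1 ≤ β) (hβs : 0 < β - s + 1)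
    (K : ℝ → ℝ) (hKm : Measurable K) (hK : ∀ t : ℝ, |K t| ≤ C / (1 + |t| ^ (β + 1)))
    (A : ℝ → ℝ)
    (hA : ∀ t : ℝ, A t = aPlus * (max t 0) ^ (s - 1) + aMinus * (max (-t) 0) ^ (s - 1))
    (ψ : ℝ → ℝ → ℝ) (hψ : ∀ t p : ℝ, ψ t p = ∑' j : ℤ, K (t - j) * A ((j : ℝ) - p))
    (Ψ : ℝ → ℝ) (hΨ : ∀ u : ℝ, Ψ u = ∫ r : ℝ, K (u - r) * A r) :
    ∀ t p : ℝ, (∫ r in (0:ℝ)..1, ψ (t + r) (p + r)) = Ψ (t - p) := by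
  -- C is nonnegative
  have hC : 0 ≤ C := by
    have h0 := (abs_nonneg (K 0)).trans (hK 0)
    have : ((0:ℝ)) ^ (β + 1) = 0 := Real.zero_rpow (by positivity)
    rw [abs_zero, this] at h0
    simpa using h0
  -- A is measurable
  have hAm : Measurable A := by
    have : A = fun t => aPlus * (max t 0) ^ (s - 1) + aMinus * (max (-t) 0) ^ (s - 1) :=
      funext hA
    have hs1 : (0:ℝ) ≤ s - 1 := by linarith
    rw [this]
    exact ((continuous_const.mul ((continuous_id.max continuous_const).rpow_const
      (fun x => Or.inr hs1))).add
      (continuous_const.mul ((continuous_id.neg.max continuous_const).rpow_const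
      (fun x => Or.inr hs1)))).measurable
  intro t p
  set u : ℝ := t - p with hu
  set f : ℝ → ℝ := fun v => K (u - v) * A v with hf
  have hfm : Measurable f := (hKm.comp (measurable_const.sub measurable_id)).mul hAm
  -- integrability of f
  have hρ : (1:ℝ) < β - s + 2 := by linarith
  have hbase : Integrable (fun x : ℝ => (1 + ‖x‖) ^ (-(β - s + 2))) := by
    apply integrable_one_add_norm
    simpa using hρ
  set D : ℝ := C * 2 ^ (β + 1) * (|aPlus| + |aMinus|) * (1 + |u|) ^ (s - 1) with hD
  have hDpos : 0 ≤ D := by positivity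
  have hfbound : ∀ v : ℝ, ‖f v‖ ≤ D * (1 + ‖u - v‖) ^ (-(β - s + 2)) := by
    intro v
    have hs1 : (0:ℝ) ≤ s - 1 := by linarith
    have hKb := aux_K_bound β C hβ K hK hC (u - v)
    have hAb := aux_A_bound s aPlus aMinus hs A hA v
    have hv1 : 1 + |v| ≤ (1 + |u|) * (1 + |u - v|) := by
      have h1 : |v| ≤ |u| + |u - v| := by
        have := abs_sub_abs_le_abs_sub u v
        have := abs_nonneg (u - v); have := abs_nonneg u; have := abs_nonneg v
        have habs : |u - v| = |v - u| := abs_sub_comm u v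
        have h := abs_sub_abs_le_abs_sub v u
        rw [← habs] at h; linarith
      have h2 : (0:ℝ) ≤ |u| := abs_nonneg u
      have h3 : (0:ℝ) ≤ |u - v| := abs_nonneg _
      nlinarith
    have hAv : |A v| ≤ (|aPlus| + |aMinus|) * ((1 + |u|) ^ (s - 1) * (1 + |u - v|) ^ (s - 1)) := by
      refine hAb.trans ?_
      gcongr ?_ * ?_
      · rw [← Real.mul_rpow (by positivity) (by positivity)]
        exact Real.rpow_le_rpow (by positivity) hv1 hs1
    have hmul : ‖f v‖ = |K (u - v)| * |A v| := by
      simp [hf, abs_mul, Real.norm_eq_abs]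
    rw [hmul]
    have hKnn : (0:ℝ) ≤ |K (u - v)| := abs_nonneg _
    have hAnn : (0:ℝ) ≤ |A v| := abs_nonneg _
    calc |K (u - v)| * |A v|
        ≤ (C * 2 ^ (β + 1) * (1 + |u - v|) ^ (-(β + 1))) *
          ((|aPlus| + |aMinus|) * ((1 + |u|) ^ (s - 1) * (1 + |u - v|) ^ (s - 1))) := by
          apply mul_le_mul hKb hAv hAnn (by positivity)
      _ = D * ((1 + |u - v|) ^ (-(β + 1)) * (1 + |u - v|) ^ (s - 1)) := by
          rw [hD]; ring
      _ = D * (1 + ‖u - v‖) ^ (-(β + 1) + (s - 1)) := by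
          rw [Real.norm_eq_abs, ← Real.rpow_add (by positivity)]
      _ = D * (1 + ‖u - v‖) ^ (-(β - s + 2)) := by
          have he : -(β + 1) + (s - 1) = -(β - s + 2) := by ring
          rw [he]
  have hdom : Integrable (fun v : ℝ => D * (1 + ‖u - v‖) ^ (-(β - s + 2))) := by
    exact (hbase.comp_sub_left u).const_mul D
  have hfint : Integrable f := by
    refine Integrable.mono hdom hfm.aestronglyMeasurable ?_
    filter_upwards with v
    refine (hfbound v).trans (le_abs_self _)
  -- the translated function g
  set g : ℝ → ℝ := fun x => f (x - (p + 1)) with hg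
  have hgint : Integrable g := hfint.comp_sub_right (p + 1)
  -- each term equality : ∫ r in 0..1, f (j - p - r) = ∫ x in 0..1, g (x + j)
  have hterm : ∀ (F : ℝ → ℝ) (j : ℤ),
      (∫ r in (0:ℝ)..1, F ((j:ℝ) - p - r)) = ∫ x in (0:ℝ)..1, F (x + (j:ℝ) - (p+1)) := by
    intro F j
    rw [intervalIntegral.integral_comp_sub_left F ((j:ℝ) - p)]
    have h1 : (fun x : ℝ => F (x + (j:ℝ) - (p+1))) = fun x => F (x + ((j:ℝ) - p - 1)) := by
      funext x; congr 1; ring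
    rw [h1, intervalIntegral.integral_comp_add_right F ((j:ℝ) - p - 1)]
    congr 1 <;> ring
  -- HasSum for g
  have hgsum : HasSum (fun j : ℤ => ∫ x in (0:ℝ)..1, g (x + j)) (∫ x, f x) := by
    have := hgint.hasSum_intervalIntegral_comp_add_int
    rwa [show (∫ x, g x) = ∫ x, f x from integral_sub_right_eq_self f (p+1)] at this
  -- HasSum for ‖g‖
  have hgnsum : HasSum (fun j : ℤ => ∫ x in (0:ℝ)..1, ‖g (x + j)‖) (∫ x, ‖f x‖) := by
    have h1 : Integrable (fun x => ‖g x‖) := hgint.norm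
    have := h1.hasSum_intervalIntegral_comp_add_int
    rwa [show (∫ x, ‖g x‖) = ∫ x, ‖f x‖ from
      integral_sub_right_eq_self (fun x => ‖f x‖) (p+1)] at this
  -- rewrite ψ
  have hψ' : ∀ r : ℝ, ψ (t + r) (p + r) = ∑' j : ℤ, f ((j:ℝ) - p - r) := by
    intro r
    rw [hψ]
    congr 1; funext j
    simp only [hf]
    congr 2 <;> ring
  have h01 : (0:ℝ) ≤ 1 := zero_le_one
  -- integrability of each piece on Ioc 0 1
  have hpiece : ∀ j : ℤ, IntegrableOn (fun r => f ((j:ℝ) - p - r)) (Set.Ioc (0:ℝ) 1) := by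
    intro j
    exact (hfint.comp_sub_left ((j:ℝ) - p)).integrableOn
  -- summability of norms
  have hsumm : Summable fun j : ℤ => ∫ r in Set.Ioc (0:ℝ) 1, ‖f ((j:ℝ) - p - r)‖ := by
    have heq : ∀ j : ℤ, (∫ r in Set.Ioc (0:ℝ) 1, ‖f ((j:ℝ) - p - r)‖)
        = ∫ x in (0:ℝ)..1, ‖g (x + j)‖ := by
      intro j
      rw [← intervalIntegral.integral_of_le h01]
      simp only [hg]
      exact hterm (fun x => ‖f x‖) j
    rw [show (fun j : ℤ => ∫ r in Set.Ioc (0:ℝ) 1, ‖f ((j:ℝ) - p - r)‖)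
        = fun j : ℤ => ∫ x in (0:ℝ)..1, ‖g (x + j)‖ from funext heq]
    exact hgnsum.summable
  calc (∫ r in (0:ℝ)..1, ψ (t + r) (p + r))
      = ∫ r in Set.Ioc (0:ℝ) 1, ∑' j : ℤ, f ((j:ℝ) - p - r) := by
        rw [intervalIntegral.integral_of_le h01]
        exact setIntegral_congr_fun measurableSet_Ioc (fun r _ => hψ' r)
    _ = ∑' j : ℤ, ∫ r in Set.Ioc (0:ℝ) 1, f ((j:ℝ) - p - r) :=
        (integral_tsum_of_summable_integral_norm hpiece hsumm).symm
    _ = ∑' j : ℤ, ∫ x in (0:ℝ)..1, g (x + j) := by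
        congr 1; funext j
        rw [← intervalIntegral.integral_of_le h01]
        simp only [hg]
        exact hterm f j
    _ = ∫ x, f x := hgsum.tsum_eq
    _ = Ψ (t - p) := by rw [hΨ]
end

section
/- As distributions on ℝ, for every positive integer n: (x ± i0)^{−n} = p.v. x^{−n} ∓ iπ·(−1)^{n−1}/(n−1)! · δ^{(n−1)}(x), where p.v. x^{−n} is the principal-value (finite-part) distribution and δ^{(n−1)} is the (n−1)-st derivative of the Dirac delta. -/
open MeasureTheory Filter Set Complex

noncomputable section
namespace SP14

local notation "𝓢" => SchwartzMap ℝ ℂ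
local notation "D" => SchwartzMap.derivCLM ℝ (F := ℂ)

/-- set `A = {|x| ≤ 1}` -/
def A : Set ℝ := {x : ℝ | |x| ≤ 1}
/-- set `B = {1 < |x|}` -/
def B : Set ℝ := {x : ℝ | 1 < |x|}

lemma measA : MeasurableSet A := (isClosed_le (_root_.continuous_abs) continuous_const).measurableSet
lemma measB : MeasurableSet B := (isOpen_lt continuous_const _root_.continuous_abs).measurableSet
lemma compl_A : Aᶜ = B := by ext x; simp [A, B, not_le]
lemma volA : volume A ≠ ⊤ := by
  have : A ⊆ Icc (-1) 1 := fun x hx => abs_le.mp hx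
  exact ne_top_of_le_ne_top (by simp) (measure_mono this)

/-- principal value of `∫ ψ(x)/x` -/
def pvL (ψ : 𝓢) : ℂ :=
  (∫ x in A, ((x : ℂ))⁻¹ * (ψ x - ψ 0)) + ∫ x in B, ((x : ℂ))⁻¹ * ψ x

lemma ae_ne_zero : ∀ᵐ x : ℝ, x ≠ 0 := by
  have h0 : volume ({(0:ℝ)} : Set ℝ) = 0 := measure_singleton 0
  rw [ae_iff]
  convert h0 using 2
  ext x
  simp

lemma meas_inv : Measurable (fun x : ℝ => ((x : ℂ))⁻¹) := Complex.measurable_ofReal.inv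

lemma norm_inv_ofReal (x : ℝ) : ‖((x : ℂ))⁻¹‖ = |x|⁻¹ := by
  rw [norm_inv, Complex.norm_real, Real.norm_eq_abs]

/-- the function `x⁻¹ (ψ x - ψ 0)` is globally bounded by the Lipschitz constant -/
lemma v_bound (ψ : 𝓢) {C : ℝ} (hC0 : 0 ≤ C) (hC : ∀ x : ℝ, ‖ψ x - ψ 0‖ ≤ C * |x|) (x : ℝ) :
    ‖((x : ℂ))⁻¹ * (ψ x - ψ 0)‖ ≤ C := by
  rcases eq_or_ne x 0 with rfl | hx
  · simpa using hC0
  · rw [norm_mul, norm_inv_ofReal]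
    calc |x|⁻¹ * ‖ψ x - ψ 0‖ ≤ |x|⁻¹ * (C * |x|) :=
          mul_le_mul_of_nonneg_left (hC x) (inv_nonneg.2 (abs_nonneg x))
      _ = C := by field_simp


lemma bdd (ψ : 𝓢) : ∃ C : ℝ, 0 ≤ C ∧ ∀ x : ℝ, ‖ψ x‖ ≤ C := by
  refine ⟨SchwartzMap.seminorm ℝ 0 0 ψ, apply_nonneg _ _, fun x => ?_⟩
  exact ψ.norm_le_seminorm ℝ x


/-- Lipschitz bound for Schwartz functions -/
lemma lip (ψ : 𝓢) : ∃ C : ℝ, 0 ≤ C ∧ ∀ x : ℝ, ‖ψ x - ψ 0‖ ≤ C * |x| := by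
  obtain ⟨C, hC0, hC⟩ := bdd (D ψ)
  refine ⟨C, hC0, fun x => ?_⟩
  have h := Convex.norm_image_sub_le_of_norm_deriv_le (s := (univ : Set ℝ)) (f := fun y => ψ y)
    (fun y _ => ψ.differentiableAt)
    (fun y _ => by simpa using hC y) convex_univ (mem_univ 0) (mem_univ x)
  simpa [Real.norm_eq_abs] using h

/-- odd functions integrate to zero over symmetric sets -/
lemma odd_setIntegral (f : ℝ → ℝ) (E : Set ℝ) (hEm : MeasurableSet E)
    (hE : ∀ x, -x ∈ E ↔ x ∈ E) (hf : ∀ x, f (-x) = - f x) : ∫ x in E, f x = 0 := by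
  have key : ∀ x, E.indicator f (-x) = - E.indicator f x := by
    intro x
    by_cases hx : x ∈ E
    · rw [indicator_of_mem ((hE x).2 hx), indicator_of_mem hx, hf]
    · rw [indicator_of_notMem (fun h => hx ((hE x).1 h)), indicator_of_notMem hx, neg_zero]
  have h1 : ∫ x, E.indicator f x = - ∫ x, E.indicator f x := by
    conv_lhs => rw [← integral_neg_eq_self (E.indicator f)]
    simp_rw [key]
    exact integral_neg _
  have h2 : ∫ x, E.indicator f x = 0 := by linarith [h1]
  rwa [integral_indicator hEm] at h2

/-- existence of principal value limit -/
lemma pv_tendsto (ψ : 𝓢) :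
    Tendsto (fun δ : ℝ => ∫ x in {x : ℝ | δ < |x|}, ((x : ℂ))⁻¹ * ψ x)
      (nhdsWithin 0 (Ioi 0)) (nhds (pvL ψ)) := by
  obtain ⟨C, hC0, hC⟩ := lip ψ
  obtain ⟨M, hM0, hM⟩ := bdd ψ
  set v : ℝ → ℂ := fun x => ((x : ℂ))⁻¹ * (ψ x - ψ 0) with hv
  set w : ℝ → ℂ := fun x => ((x : ℂ))⁻¹ * ψ x with hw
  have hvmeas : AEStronglyMeasurable v volume :=
    (meas_inv.mul ((ψ.continuous.measurable).sub measurable_const)).aestronglyMeasurable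
  have hwmeas : AEStronglyMeasurable w volume :=
    (meas_inv.mul ψ.continuous.measurable).aestronglyMeasurable
  have hvb : ∀ x, ‖v x‖ ≤ C := v_bound ψ hC0 hC
  -- integrability of w on B
  have hwB : IntegrableOn w B := by
    refine Integrable.mono (ψ.integrable.integrableOn (s := B)) hwmeas.restrict ?_
    refine (ae_restrict_iff' measB).2 (ae_of_all _ fun x hx => ?_)
    rw [hw, norm_mul, norm_inv_ofReal]
    have h1 : (1:ℝ) < |x| := hx
    have : |x|⁻¹ ≤ 1 := by
      rw [inv_le_one_iff₀]; right; exact h1.le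
    calc |x|⁻¹ * ‖ψ x‖ ≤ 1 * ‖ψ x‖ := mul_le_mul_of_nonneg_right this (norm_nonneg _)
      _ = ‖ψ x‖ := one_mul _
  -- the measurable sets E δ
  have measE : ∀ δ : ℝ, MeasurableSet {x : ℝ | δ < |x| ∧ |x| ≤ 1} := fun δ =>
    ((isOpen_lt continuous_const _root_.continuous_abs).measurableSet).inter
      ((isClosed_le _root_.continuous_abs continuous_const).measurableSet)
  have measS : ∀ δ : ℝ, MeasurableSet {x : ℝ | δ < |x|} := fun δ =>
    (isOpen_lt continuous_const _root_.continuous_abs).measurableSet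
  have hEsubA : ∀ δ : ℝ, {x : ℝ | δ < |x| ∧ |x| ≤ 1} ⊆ A := fun δ x hx => hx.2
  have hEvol : ∀ δ : ℝ, volume {x : ℝ | δ < |x| ∧ |x| ≤ 1} ≠ ⊤ := fun δ =>
    ne_top_of_le_ne_top volA (measure_mono (hEsubA δ))
  have hvE : ∀ δ : ℝ, IntegrableOn v {x : ℝ | δ < |x| ∧ |x| ≤ 1} := by
    intro δ
    refine Integrable.mono (integrableOn_const (hEvol δ) : IntegrableOn (fun _ => C) _ _) hvmeas.restrict ?_
    refine ae_of_all _ fun x => ?_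
    simpa [Real.norm_eq_abs, _root_.abs_of_nonneg hC0] using hvb x
  -- key step : for 0 < δ < 1 the truncated integral splits
  have key : ∀ δ : ℝ, 0 < δ → δ < 1 →
      ∫ x in {x : ℝ | δ < |x|}, w x
        = (∫ x in {x : ℝ | δ < |x| ∧ |x| ≤ 1}, v x) + ∫ x in B, w x := by
    intro δ hδ0 hδ1
    have hsplit : {x : ℝ | δ < |x|} = {x : ℝ | δ < |x| ∧ |x| ≤ 1} ∪ B := by
      ext x
      simp only [mem_setOf_eq, mem_union, B]
      constructor
      · intro hx
        by_cases h1 : |x| ≤ 1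
        · exact Or.inl ⟨hx, h1⟩
        · exact Or.inr (not_le.1 h1)
      · rintro (⟨h, _⟩ | h)
        · exact h
        · exact hδ1.trans h
    -- bounded on E δ hence integrable
    have hwE : IntegrableOn w {x : ℝ | δ < |x| ∧ |x| ≤ 1} := by
      refine Integrable.mono (integrableOn_const (hEvol δ) : IntegrableOn (fun _ => M * δ⁻¹) _ _) hwmeas.restrict ?_
      refine (ae_restrict_iff' (measE δ)).2 (ae_of_all _ fun x hx => ?_)
      rw [hw, norm_mul, norm_inv_ofReal, Real.norm_eq_abs]
      have h1 : |x|⁻¹ ≤ δ⁻¹ := inv_anti₀ hδ0 hx.1.le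
      have : |x|⁻¹ * ‖ψ x‖ ≤ δ⁻¹ * M :=
        mul_le_mul h1 (hM x) (norm_nonneg _) (inv_nonneg.2 hδ0.le)
      rw [_root_.abs_of_nonneg (mul_nonneg hM0 (inv_nonneg.2 hδ0.le))]
      linarith [mul_comm δ⁻¹ M]
    have hdisj : Disjoint {x : ℝ | δ < |x| ∧ |x| ≤ 1} B := by
      rw [disjoint_left]
      intro x hx hxB
      exact absurd hx.2 (not_le.2 hxB)
    rw [hsplit, setIntegral_union hdisj measB hwE hwB]
    congr 1
    -- on E δ, subtract the odd part
    have hcE : IntegrableOn (fun x : ℝ => ((x : ℂ))⁻¹ * ψ 0) {x : ℝ | δ < |x| ∧ |x| ≤ 1} := by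
      refine Integrable.mono (integrableOn_const (hEvol δ) : IntegrableOn (fun _ => ‖ψ 0‖ * δ⁻¹) _ _) (meas_inv.mul measurable_const).aestronglyMeasurable.restrict ?_
      refine (ae_restrict_iff' (measE δ)).2 (ae_of_all _ fun x hx => ?_)
      rw [norm_mul, norm_inv_ofReal, Real.norm_eq_abs]
      have h1 : |x|⁻¹ ≤ δ⁻¹ := inv_anti₀ hδ0 hx.1.le
      have : |x|⁻¹ * ‖ψ 0‖ ≤ δ⁻¹ * ‖ψ 0‖ :=
        mul_le_mul_of_nonneg_right h1 (norm_nonneg _)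
      rw [_root_.abs_of_nonneg (mul_nonneg (norm_nonneg _) (inv_nonneg.2 hδ0.le))]
      linarith [mul_comm δ⁻¹ ‖ψ 0‖]
    have hfun : ∀ x : ℝ, w x = v x + ((x : ℂ))⁻¹ * ψ 0 := by
      intro x; rw [hw, hv]; ring
    calc ∫ x in {x : ℝ | δ < |x| ∧ |x| ≤ 1}, w x
        = ∫ x in {x : ℝ | δ < |x| ∧ |x| ≤ 1}, (v x + ((x : ℂ))⁻¹ * ψ 0) := by
          simp_rw [hfun]
      _ = (∫ x in {x : ℝ | δ < |x| ∧ |x| ≤ 1}, v x)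
            + ∫ x in {x : ℝ | δ < |x| ∧ |x| ≤ 1}, ((x : ℂ))⁻¹ * ψ 0 :=
          integral_add (hvE δ) hcE
      _ = ∫ x in {x : ℝ | δ < |x| ∧ |x| ≤ 1}, v x := by
          have hsm : ∀ x : ℝ, ((x : ℂ))⁻¹ * ψ 0 = (x⁻¹ : ℝ) • ψ 0 := by
            intro x; rw [Complex.real_smul, Complex.ofReal_inv]
          rw [show (fun x : ℝ => ((x:ℂ))⁻¹ * ψ 0) = fun x : ℝ => (x⁻¹ : ℝ) • ψ 0 from funext hsm,
            integral_smul_const,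
            odd_setIntegral _ _ (measE δ) (fun x => by simp [abs_neg]) (fun x => inv_neg ..),
            zero_smul, add_zero]
  -- a.e. nonvanishing
  have hne : ∀ᵐ x : ℝ, x ≠ 0 := by
    have h0 : volume ({(0:ℝ)} : Set ℝ) = 0 := measure_singleton 0
    rw [ae_iff]
    convert h0 using 2
    ext x
    simp
  -- dominated convergence for the E δ part
  have hdct : Tendsto (fun δ : ℝ => ∫ x in {x : ℝ | δ < |x| ∧ |x| ≤ 1}, v x)
      (nhdsWithin 0 (Ioi 0)) (nhds (∫ x in A, v x)) := by
    have hrw : ∀ δ : ℝ, ∫ x in {x : ℝ | δ < |x| ∧ |x| ≤ 1}, v x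
        = ∫ x : ℝ, ({x : ℝ | δ < |x| ∧ |x| ≤ 1}).indicator v x := fun δ =>
      (integral_indicator (measE δ)).symm
    rw [← integral_indicator measA]
    simp_rw [hrw]
    refine tendsto_integral_filter_of_dominated_convergence (A.indicator fun _ => C)
      (Eventually.of_forall fun δ => (hvmeas.indicator (measE δ)))
      (Eventually.of_forall fun δ => (ae_of_all _ fun x => ?_)) ?_ ?_
    · by_cases hx : x ∈ {x : ℝ | δ < |x| ∧ |x| ≤ 1}
      · have h1 : A.indicator (fun _ : ℝ => C) x = C := by
          simp only [Set.indicator, A, mem_setOf_eq, hx.2, if_true]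
        rw [indicator_of_mem hx, h1]
        exact hvb x
      · rw [indicator_of_notMem hx, norm_zero]
        exact indicator_nonneg (fun _ _ => hC0) x
    · rw [integrable_indicator_iff measA]
      exact integrableOn_const volA
    · filter_upwards [hne] with x hx
      have habs : 0 < |x| := abs_pos.2 hx
      have heq : (fun _ : ℝ => A.indicator v x)
          =ᶠ[nhdsWithin 0 (Ioi 0)] fun δ : ℝ => ({x : ℝ | δ < |x| ∧ |x| ≤ 1}).indicator v x := by
        filter_upwards [Ioo_mem_nhdsGT_of_mem
          (show (0:ℝ) ∈ Ico 0 |x| from ⟨le_refl 0, habs⟩)] with δ hδ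
        by_cases hA : |x| ≤ 1
        · simp only [Set.indicator, A, mem_setOf_eq, hA, hδ.2, and_true, if_true]
        · simp only [Set.indicator, A, mem_setOf_eq, hA, and_false, if_false]
      exact Tendsto.congr' heq tendsto_const_nhds
  have hfinal : Tendsto
      (fun δ : ℝ => (∫ x in {x : ℝ | δ < |x| ∧ |x| ≤ 1}, v x) + ∫ x in B, w x)
      (nhdsWithin 0 (Ioi 0)) (nhds (pvL ψ)) := by
    have hL : pvL ψ = (∫ x in A, v x) + ∫ x in B, w x := rfl
    rw [hL]
    exact hdct.add_const _
  refine Tendsto.congr' ?_ hfinal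
  filter_upwards [Ioo_mem_nhdsGT_of_mem (show (0:ℝ) ∈ Ico 0 1 from ⟨le_refl 0, zero_lt_one⟩)]
    with δ hδ
  exact (key δ hδ.1 hδ.2).symm


/-- pointwise bound `|x/(x²+ε²)| ≤ |x|⁻¹` -/
lemma rS_le_inv (ε x : ℝ) : |x/(x^2+ε^2)| ≤ |x|⁻¹ := by
  rcases eq_or_ne x 0 with rfl | hx
  · simp
  · have hd : 0 < x^2+ε^2 := by positivity
    rw [abs_div, _root_.abs_of_pos hd, div_le_iff₀ hd]
    have h1 : |x|⁻¹ * (x^2+ε^2) = |x| + |x|⁻¹ * ε^2 := by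
      rw [mul_add, ← _root_.sq_abs x, sq, ← mul_assoc, inv_mul_cancel₀ (abs_ne_zero.2 hx), one_mul]
    have h2 : 0 ≤ |x|⁻¹ * ε^2 := by positivity
    linarith
/-- pointwise bound `|x/(x²+ε²)| ≤ (2ε)⁻¹` -/
lemma rS_le (ε x : ℝ) (hε : 0 < ε) : |x/(x^2+ε^2)| ≤ (2*ε)⁻¹ := by
  have hd : 0 < x^2+ε^2 := by positivity
  rw [abs_div, _root_.abs_of_pos hd, div_le_iff₀ hd, inv_mul_eq_div, le_div_iff₀ (by positivity)]
  nlinarith [sq_nonneg (|x| - ε), _root_.sq_abs x]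
/-- pointwise bound `|ε/(x²+ε²)| ≤ ε⁻¹` -/
lemma rT_le (ε x : ℝ) (hε : 0 < ε) : |ε/(x^2+ε^2)| ≤ ε⁻¹ := by
  have hd : 0 < x^2+ε^2 := by positivity
  rw [abs_div, _root_.abs_of_pos hd, _root_.abs_of_pos hε, div_le_iff₀ hd, inv_mul_eq_div,
    le_div_iff₀ (by positivity)]
  nlinarith [sq_nonneg x]

lemma contS (ε : ℝ) (hε : 0 < ε) : Continuous fun x : ℝ => ((x/(x^2+ε^2) : ℝ) : ℂ) :=
  Complex.continuous_ofReal.comp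
    (continuous_id.div (by continuity) (fun x => ne_of_gt (by positivity)))

lemma contT (ε : ℝ) (hε : 0 < ε) : Continuous fun x : ℝ => ((ε/(x^2+ε^2) : ℝ) : ℂ) :=
  Complex.continuous_ofReal.comp
    (continuous_const.div (by continuity) (fun x => ne_of_gt (by positivity)))

/-- Sokhotski–Plemelj for n = 1 -/
lemma plemelj (ψ : 𝓢) (σ : ℝ) (hσ : σ = 1 ∨ σ = -1) :
    Tendsto (fun ε : ℝ => ∫ x : ℝ, ((x : ℂ) + (σ : ℂ) * (ε : ℂ) * Complex.I)⁻¹ * ψ x)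
      (nhdsWithin 0 (Ioi 0))
      (nhds (pvL ψ - (σ : ℂ) * (Real.pi : ℂ) * Complex.I * ψ 0)) := by
  obtain ⟨C, hC0, hC⟩ := lip ψ
  obtain ⟨M, hM0, hM⟩ := bdd ψ
  have hσ0 : σ ≠ 0 := by rcases hσ with rfl|rfl <;> norm_num
  -- the two families of integrands
  set S : ℝ → ℂ := fun ε => ∫ x : ℝ, ((x/(x^2+ε^2) : ℝ) : ℂ) * ψ x with hSdef
  set T : ℝ → ℂ := fun ε => ∫ x : ℝ, ((ε/(x^2+ε^2) : ℝ) : ℂ) * ψ x with hTdef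
  have hS_int : ∀ ε : ℝ, 0 < ε → Integrable (fun x : ℝ => ((x/(x^2+ε^2) : ℝ) : ℂ) * ψ x) := by
    intro ε hε
    refine ψ.integrable.bdd_mul (contS ε hε).aestronglyMeasurable (c := (2*ε)⁻¹) (ae_of_all _ fun x => ?_)
    rw [Complex.norm_real, Real.norm_eq_abs]
    exact rS_le ε x hε
  have hT_int : ∀ ε : ℝ, 0 < ε → Integrable (fun x : ℝ => ((ε/(x^2+ε^2) : ℝ) : ℂ) * ψ x) := by
    intro ε hε
    refine ψ.integrable.bdd_mul (contT ε hε).aestronglyMeasurable (c := ε⁻¹) (ae_of_all _ fun x => ?_)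
    rw [Complex.norm_real, Real.norm_eq_abs]
    exact rT_le ε x hε
  -- decomposition of the integral
  have hdecomp : ∀ ε : ℝ, 0 < ε →
      (∫ x : ℝ, ((x : ℂ) + (σ : ℂ) * (ε : ℂ) * Complex.I)⁻¹ * ψ x)
        = S ε - (σ : ℂ) * Complex.I * T ε := by
    intro ε hε
    have hptwise : ∀ x : ℝ, ((x : ℂ) + (σ : ℂ) * (ε : ℂ) * Complex.I)⁻¹ * ψ x
        = ((x/(x^2+ε^2) : ℝ) : ℂ) * ψ x
          - (σ : ℂ) * Complex.I * (((ε/(x^2+ε^2) : ℝ) : ℂ) * ψ x) := by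
      intro x
      have hd : (0:ℝ) < x^2+ε^2 := by positivity
      have hdc : ((x:ℂ)^2+(ε:ℂ)^2) ≠ 0 := by
        have := Complex.ofReal_ne_zero.2 (ne_of_gt hd)
        push_cast at this
        exact this
      have hσ2 : (σ:ℂ)^2 = 1 := by rcases hσ with rfl|rfl <;> norm_num
      have h1 : ((x:ℂ) + σ*ε*Complex.I) * (((x:ℂ) - σ*ε*Complex.I)/((x:ℂ)^2+(ε:ℂ)^2)) = 1 := by
        rw [mul_div_assoc', div_eq_one_iff_eq hdc]
        linear_combination (ε:ℂ)^2*hσ2 - (σ:ℂ)^2*(ε:ℂ)^2*Complex.I_sq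
      rw [inv_eq_of_mul_eq_one_right h1]
      push_cast
      ring
    simp_rw [hptwise]
    rw [integral_sub (hS_int ε hε) ((hT_int ε hε).const_mul _), integral_const_mul]
  -- the T part tends to π ψ 0
  have hT_tendsto : Tendsto T (nhdsWithin 0 (Ioi 0)) (nhds ((Real.pi : ℂ) * ψ 0)) := by
    have hsub : ∀ ε : ℝ, 0 < ε →
        T ε = ∫ u : ℝ, (((1+u^2)⁻¹ : ℝ) : ℂ) * ψ (ε*u) := by
      intro ε hε
      have h1 := MeasureTheory.Measure.integral_comp_mul_left
        (fun x : ℝ => ((ε/(x^2+ε^2) : ℝ) : ℂ) * ψ x) ε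
      have hεne : ε ≠ 0 := ne_of_gt hε
      -- h1 : ∫ x, g (ε x) = |ε⁻¹| • ∫ g
      have h2 : T ε = ε • ∫ x : ℝ, ((ε/((ε*x)^2+ε^2) : ℝ) : ℂ) * ψ (ε*x) := by
        rw [h1, smul_smul, abs_of_pos (inv_pos.2 hε), mul_inv_cancel₀ hεne, one_smul, hTdef]
      rw [h2, ← integral_smul]
      congr 1
      ext u
      have h3 : ε • ((((ε/((ε*u)^2+ε^2)) : ℝ) : ℂ) * ψ (ε*u))
          = ((ε * (ε/((ε*u)^2+ε^2)) : ℝ) : ℂ) * ψ (ε*u) := by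
        rw [Complex.real_smul]
        push_cast
        ring
      rw [h3]
      congr 2
      field_simp
      ring
    have hlim : Tendsto (fun ε : ℝ => ∫ u : ℝ, (((1+u^2)⁻¹ : ℝ) : ℂ) * ψ (ε*u))
        (nhdsWithin 0 (Ioi 0)) (nhds ((Real.pi : ℂ) * ψ 0)) := by
      have hπ : (Real.pi : ℂ) * ψ 0 = ∫ u : ℝ, (((1+u^2)⁻¹ : ℝ) : ℂ) * ψ 0 := by
        have : ∀ u : ℝ, (((1+u^2)⁻¹ : ℝ) : ℂ) * ψ 0 = ((1+u^2)⁻¹ : ℝ) • ψ 0 := fun u => by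
          rw [Complex.real_smul]
        simp_rw [this]
        rw [integral_smul_const, integral_univ_inv_one_add_sq, Complex.real_smul]
      rw [hπ]
      refine tendsto_integral_filter_of_dominated_convergence
        (fun u => (1+u^2)⁻¹ * M) ?_ ?_ ?_ ?_
      · refine Eventually.of_forall fun ε => Continuous.aestronglyMeasurable ?_
        exact (Complex.continuous_ofReal.comp
            ((continuous_const.add (continuous_pow 2)).inv₀ (fun u => (by positivity : (0:ℝ) < 1 + u^2).ne'))).mul
          (ψ.continuous.comp (continuous_const.mul continuous_id))
      · refine Eventually.of_forall fun ε => ae_of_all _ fun u => ?_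
        rw [norm_mul, Complex.norm_real, Real.norm_eq_abs,
          _root_.abs_of_pos (inv_pos.2 (by positivity : (0:ℝ) < 1+u^2))]
        exact mul_le_mul_of_nonneg_left (hM _) (by positivity)
      · exact integrable_inv_one_add_sq.mul_const M
      · refine ae_of_all _ fun u => ?_
        refine Tendsto.const_mul _ ?_
        have h0 : Tendsto (fun ε : ℝ => ε * u) (nhdsWithin 0 (Ioi 0)) (nhds 0) := by
          have := (continuous_mul_right u).tendsto (0:ℝ)
          rw [zero_mul] at this
          exact this.mono_left nhdsWithin_le_nhds
        exact (ψ.continuous.tendsto 0).comp h0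
    refine Tendsto.congr' ?_ hlim
    filter_upwards [self_mem_nhdsWithin] with ε hε
    exact (hsub ε hε).symm
  -- the S part tends to pvL ψ
  have hS_tendsto : Tendsto S (nhdsWithin 0 (Ioi 0)) (nhds (pvL ψ)) := by
    -- integrability of the pieces on A
    have hintA0 : ∀ ε : ℝ, 0 < ε →
        IntegrableOn (fun x : ℝ => ((x/(x^2+ε^2) : ℝ) : ℂ) * ψ 0) A := by
      intro ε hε
      refine Integrable.mono
        (integrableOn_const volA :
          IntegrableOn (fun _ => (2*ε)⁻¹ * ‖ψ 0‖) A _)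
        ((contS ε hε).mul continuous_const).aestronglyMeasurable.restrict
        (ae_of_all _ fun x => ?_)
      rw [norm_mul, Complex.norm_real, Real.norm_eq_abs, Real.norm_eq_abs,
        _root_.abs_of_nonneg (mul_nonneg (inv_nonneg.2 (by positivity)) (norm_nonneg _))]
      exact mul_le_mul_of_nonneg_right (rS_le ε x hε) (norm_nonneg _)
    have hintA1 : ∀ ε : ℝ, 0 < ε →
        IntegrableOn (fun x : ℝ => ((x/(x^2+ε^2) : ℝ) : ℂ) * (ψ x - ψ 0)) A := by
      intro ε hε
      exact ((hS_int ε hε).integrableOn.sub (hintA0 ε hε)).congr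
        (ae_of_all _ fun x => (mul_sub _ _ _).symm)
    -- splitting identity
    have hkey : ∀ ε : ℝ, 0 < ε → S ε =
        (∫ x in A, ((x/(x^2+ε^2) : ℝ) : ℂ) * (ψ x - ψ 0)) +
        ∫ x in B, ((x/(x^2+ε^2) : ℝ) : ℂ) * ψ x := by
      intro ε hε
      have h1 : S ε = (∫ x in A, ((x/(x^2+ε^2) : ℝ) : ℂ) * ψ x)
          + ∫ x in B, ((x/(x^2+ε^2) : ℝ) : ℂ) * ψ x := by
        rw [hSdef, ← compl_A, integral_add_compl measA (hS_int ε hε)]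
      rw [h1]
      congr 1
      have hfun : ∀ x : ℝ, ((x/(x^2+ε^2) : ℝ) : ℂ) * ψ x
          = ((x/(x^2+ε^2) : ℝ) : ℂ) * (ψ x - ψ 0) + ((x/(x^2+ε^2) : ℝ) : ℂ) * ψ 0 := by
        intro x; ring
      calc ∫ x in A, ((x/(x^2+ε^2) : ℝ) : ℂ) * ψ x
          = ∫ x in A, (((x/(x^2+ε^2) : ℝ) : ℂ) * (ψ x - ψ 0)
              + ((x/(x^2+ε^2) : ℝ) : ℂ) * ψ 0) := by simp_rw [hfun]
        _ = (∫ x in A, ((x/(x^2+ε^2) : ℝ) : ℂ) * (ψ x - ψ 0))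
              + ∫ x in A, ((x/(x^2+ε^2) : ℝ) : ℂ) * ψ 0 :=
            integral_add (hintA1 ε hε) (hintA0 ε hε)
        _ = ∫ x in A, ((x/(x^2+ε^2) : ℝ) : ℂ) * (ψ x - ψ 0) := by
            have hsm : ∀ x : ℝ, ((x/(x^2+ε^2) : ℝ) : ℂ) * ψ 0
                = (x/(x^2+ε^2) : ℝ) • ψ 0 := fun x => by rw [Complex.real_smul]
            rw [show (fun x : ℝ => ((x/(x^2+ε^2):ℝ):ℂ) * ψ 0)
                = fun x : ℝ => (x/(x^2+ε^2) : ℝ) • ψ 0 from funext hsm,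
              integral_smul_const,
              odd_setIntegral _ _ measA (fun x => by simp [A, abs_neg])
                (fun x => by rw [neg_sq, neg_div]),
              zero_smul, add_zero]
    -- limit of the A part
    have hA_tendsto : Tendsto
        (fun ε : ℝ => ∫ x in A, ((x/(x^2+ε^2) : ℝ) : ℂ) * (ψ x - ψ 0))
        (nhdsWithin 0 (Ioi 0)) (nhds (∫ x in A, ((x:ℂ))⁻¹ * (ψ x - ψ 0))) := by
      refine tendsto_integral_filter_of_dominated_convergence (fun _ => C) ?_ ?_ ?_ ?_
      · filter_upwards [self_mem_nhdsWithin] with ε hε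
        exact ((contS ε hε).mul ((ψ.continuous.sub continuous_const))).aestronglyMeasurable.restrict
      · filter_upwards [self_mem_nhdsWithin] with ε hε
        refine ae_of_all _ fun x => ?_
        rw [norm_mul, Complex.norm_real, Real.norm_eq_abs]
        rcases eq_or_ne x 0 with rfl | hx
        · simpa using hC0
        · calc |x/(x^2+ε^2)| * ‖ψ x - ψ 0‖ ≤ |x|⁻¹ * (C * |x|) :=
                mul_le_mul (rS_le_inv ε x) (hC x) (norm_nonneg _) (inv_nonneg.2 (abs_nonneg x))
            _ = C := by field_simp
      · exact integrableOn_const volA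
      · refine ae_restrict_of_ae ?_
        filter_upwards [ae_ne_zero] with x hx
        have hx2 : x^2 ≠ 0 := pow_ne_zero 2 hx
        have h1 : Tendsto (fun ε : ℝ => x/(x^2+ε^2)) (nhds 0) (nhds (x⁻¹)) := by
          have hcont : Tendsto (fun ε : ℝ => x/(x^2+ε^2)) (nhds 0) (nhds (x/(x^2+0^2))) := by
            refine Tendsto.div tendsto_const_nhds ?_ (by simpa using hx2)
            exact (continuous_const.add (continuous_pow 2)).tendsto 0
          simpa [sq, div_mul_eq_div_div, div_self hx, one_div] using hcont
        have h2 : Tendsto (fun ε : ℝ => ((x/(x^2+ε^2) : ℝ) : ℂ)) (nhds 0) (nhds ((x:ℂ)⁻¹)) := by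
          have := (Complex.continuous_ofReal.tendsto _).comp h1
          rwa [Complex.ofReal_inv] at this
        exact ((h2.mono_left nhdsWithin_le_nhds).mul_const _)
    -- limit of the B part
    have hB_tendsto : Tendsto
        (fun ε : ℝ => ∫ x in B, ((x/(x^2+ε^2) : ℝ) : ℂ) * ψ x)
        (nhdsWithin 0 (Ioi 0)) (nhds (∫ x in B, ((x:ℂ))⁻¹ * ψ x)) := by
      refine tendsto_integral_filter_of_dominated_convergence (fun x => ‖ψ x‖) ?_ ?_ ?_ ?_
      · filter_upwards [self_mem_nhdsWithin] with ε hε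
        exact ((contS ε hε).mul ψ.continuous).aestronglyMeasurable.restrict
      · filter_upwards [self_mem_nhdsWithin] with ε hε
        refine (ae_restrict_iff' measB).2 (ae_of_all _ fun x hx => ?_)
        rw [norm_mul, Complex.norm_real, Real.norm_eq_abs]
        have h1 : (1:ℝ) < |x| := hx
        have h2 : |x|⁻¹ ≤ 1 := by rw [inv_le_one_iff₀]; right; exact h1.le
        calc |x/(x^2+ε^2)| * ‖ψ x‖ ≤ |x|⁻¹ * ‖ψ x‖ :=
              mul_le_mul_of_nonneg_right (rS_le_inv ε x) (norm_nonneg _)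
          _ ≤ 1 * ‖ψ x‖ := mul_le_mul_of_nonneg_right h2 (norm_nonneg _)
          _ = ‖ψ x‖ := one_mul _
      · exact ψ.integrable.norm.integrableOn
      · refine ae_restrict_of_ae ?_
        filter_upwards [ae_ne_zero] with x hx
        have hx2 : x^2 ≠ 0 := pow_ne_zero 2 hx
        have h1 : Tendsto (fun ε : ℝ => x/(x^2+ε^2)) (nhds 0) (nhds (x⁻¹)) := by
          have hcont : Tendsto (fun ε : ℝ => x/(x^2+ε^2)) (nhds 0) (nhds (x/(x^2+0^2))) := by
            refine Tendsto.div tendsto_const_nhds ?_ (by simpa using hx2)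
            exact (continuous_const.add (continuous_pow 2)).tendsto 0
          simpa [sq, div_mul_eq_div_div, div_self hx, one_div] using hcont
        have h2 : Tendsto (fun ε : ℝ => ((x/(x^2+ε^2) : ℝ) : ℂ)) (nhds 0) (nhds ((x:ℂ)⁻¹)) := by
          have := (Complex.continuous_ofReal.tendsto _).comp h1
          rwa [Complex.ofReal_inv] at this
        exact ((h2.mono_left nhdsWithin_le_nhds).mul_const _)
    have hsum := hA_tendsto.add hB_tendsto
    refine Tendsto.congr' ?_ hsum
    filter_upwards [self_mem_nhdsWithin] with ε hε
    exact (hkey ε hε).symm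
  have := hS_tendsto.sub (hT_tendsto.const_mul ((σ : ℂ) * Complex.I))
  have hlim_eq : pvL ψ - (σ : ℂ) * Complex.I * ((Real.pi : ℂ) * ψ 0)
      = pvL ψ - (σ : ℂ) * (Real.pi : ℂ) * Complex.I * ψ 0 := by ring
  rw [hlim_eq] at this
  refine Tendsto.congr' ?_ this
  filter_upwards [self_mem_nhdsWithin] with ε hε
  exact (hdecomp ε hε).symm

/-- integration by parts step -/
lemma ibp (φ : 𝓢) (c : ℂ) (hc : c.im ≠ 0) (k : ℕ) (hk : 1 ≤ k) :
    ∫ x : ℝ, ((x : ℂ) + c) ^ (-((k : ℤ) + 1)) * φ x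
      = (k : ℂ)⁻¹ * ∫ x : ℝ, ((x : ℂ) + c) ^ (-(k : ℤ)) * (D φ) x := by
  have hne : ∀ x : ℝ, (x:ℂ) + c ≠ 0 := by
    intro x h
    have h2 : ((x:ℂ) + c).im = 0 := by rw [h]; simp
    simp only [Complex.add_im, Complex.ofReal_im, zero_add] at h2
    exact hc h2
  have him : 0 < |c.im| := abs_pos.2 hc
  have hb : ∀ m : ℕ, ∀ x : ℝ, ‖((x:ℂ)+c) ^ (-(m:ℤ))‖ ≤ (|c.im|⁻¹) ^ m := by
    intro m x
    rw [norm_zpow, zpow_neg, zpow_natCast, ← inv_pow]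
    refine pow_le_pow_left₀ (inv_nonneg.2 (norm_nonneg _)) ?_ m
    refine inv_anti₀ him ?_
    calc |c.im| = |((x:ℂ)+c).im| := by simp
      _ ≤ ‖(x:ℂ)+c‖ := Complex.abs_im_le_norm _
  have hcont : ∀ m : ℤ, Continuous fun x : ℝ => ((x:ℂ)+c)^m := fun m =>
    Continuous.zpow₀ (Complex.continuous_ofReal.add continuous_const) m (fun x => Or.inl (hne x))
  have hint : ∀ m : ℕ, ∀ g : 𝓢, Integrable (fun x : ℝ => ((x:ℂ)+c)^(-(m:ℤ)) * g x) := by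
    intro m g
    exact g.integrable.bdd_mul (hcont _).aestronglyMeasurable (ae_of_all _ (hb m))
  -- the function and its derivative
  set f : ℝ → ℂ := fun x => ((x:ℂ)+c)^(-(k:ℤ)) * φ x with hf
  set f' : ℝ → ℂ := fun x =>
    (-(k:ℂ)) * (((x:ℂ)+c)^(-((k+1:ℕ):ℤ)) * φ x) + ((x:ℂ)+c)^(-(k:ℤ)) * (D φ) x with hf'
  have hderiv : ∀ x : ℝ, HasDerivAt f (f' x) x := by
    intro x
    have hz := hasDerivAt_zpow (-(k:ℤ)) ((x:ℂ)+c) (Or.inl (hne x))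
    have hadd : HasDerivAt (fun z : ℂ => z + c) 1 (x:ℂ) := (hasDerivAt_id _).add_const c
    have h1 : HasDerivAt (fun z : ℂ => (z+c)^(-(k:ℤ)))
        ((-(k:ℤ)) * ((x:ℂ)+c)^(-(k:ℤ)-1)) (x:ℂ) := by
      refine (HasDerivAt.comp (x:ℂ) hz hadd).congr_deriv ?_
      push_cast; ring
    have h2 := h1.comp_ofReal
    have h3 : HasDerivAt (fun y : ℝ => φ y) ((D φ) x) x := by
      simpa using φ.differentiableAt.hasDerivAt
    have h4 := h2.mul h3
    have hcast : -(k:ℤ) - 1 = -((k+1:ℕ):ℤ) := by push_cast; ring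
    refine h4.congr_deriv ?_
    rw [hf', hcast]
    push_cast
    ring
  have hf'int : Integrable f' := by
    refine Integrable.add ?_ (hint k (D φ))
    exact (hint (k+1) φ).const_mul _
  -- decay of f at ±∞
  have hnorm_le : ∀ x : ℝ, ‖f x‖ ≤ (|c.im|⁻¹)^k * ‖φ x‖ := by
    intro x
    rw [hf, norm_mul]
    exact mul_le_mul_of_nonneg_right (hb k x) (norm_nonneg _)
  have hzero : Tendsto (fun x : ℝ => (|c.im|⁻¹)^k * ‖φ x‖) (Filter.cocompact ℝ) (nhds 0) := by
    have := (zero_at_infty (φ : 𝓢)).norm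
    have h5 := this.const_mul ((|c.im|⁻¹)^k)
    simpa using h5
  have htop : Tendsto f atTop (nhds 0) := by
    refine squeeze_zero_norm hnorm_le ?_
    exact hzero.mono_left (by rw [cocompact_eq_atBot_atTop]; exact le_sup_right)
  have hbot : Tendsto f atBot (nhds 0) := by
    refine squeeze_zero_norm hnorm_le ?_
    exact hzero.mono_left (by rw [cocompact_eq_atBot_atTop]; exact le_sup_left)
  have hIoi : ∫ x in Ioi (0:ℝ), f' x = 0 - f 0 :=
    integral_Ioi_of_hasDerivAt_of_tendsto' (fun x _ => hderiv x) hf'int.integrableOn htop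
  have hIic : ∫ x in Iic (0:ℝ), f' x = f 0 - 0 :=
    integral_Iic_of_hasDerivAt_of_tendsto' (fun x _ => hderiv x) hf'int.integrableOn hbot
  have htotal : ∫ x : ℝ, f' x = 0 := by
    rw [← integral_add_compl measurableSet_Iic hf'int, compl_Iic, hIic, hIoi]
    ring
  have hsplit : ∫ x : ℝ, f' x
      = (-(k:ℂ)) * (∫ x : ℝ, ((x:ℂ)+c)^(-((k+1:ℕ):ℤ)) * φ x)
        + ∫ x : ℝ, ((x:ℂ)+c)^(-(k:ℤ)) * (D φ) x := by
    rw [hf']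
    rw [integral_add ((hint (k+1) φ).const_mul _) (hint k (D φ)), integral_const_mul]
  have hk0 : (k:ℂ) ≠ 0 := Nat.cast_ne_zero.2 (by omega)
  have hmain : (-(k:ℂ)) * (∫ x : ℝ, ((x:ℂ)+c)^(-((k+1:ℕ):ℤ)) * φ x)
      + ∫ x : ℝ, ((x:ℂ)+c)^(-(k:ℤ)) * (D φ) x = 0 := by
    rw [← hsplit]; exact htotal
  have hcast : -((k:ℤ)+1) = -((k+1:ℕ):ℤ) := by push_cast; ring
  rw [hcast]
  have hI : (k:ℂ) * (∫ x : ℝ, ((x:ℂ)+c)^(-((k+1:ℕ):ℤ)) * φ x)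
      = ∫ x : ℝ, ((x:ℂ)+c)^(-(k:ℤ)) * (D φ) x := by
    linear_combination -hmain
  rw [← hI, ← mul_assoc, inv_mul_cancel₀ hk0, one_mul]

/-- iterated integration by parts -/
lemma iter (c : ℂ) (hc : c.im ≠ 0) (m : ℕ) (φ : 𝓢) :
    ∫ x : ℝ, ((x : ℂ) + c) ^ (-((m : ℤ) + 1)) * φ x
      = ((m.factorial : ℂ))⁻¹ * ∫ x : ℝ, ((x : ℂ) + c)⁻¹ * ((D)^[m] φ) x := by
  induction m generalizing φ with
  | zero =>
    norm_num
  | succ j ih =>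
    have h1 := ibp φ c hc (j+1) (by omega)
    push_cast at h1 ⊢
    rw [h1]
    have h2 := ih (D φ)
    push_cast at h2
    rw [h2, ← Function.iterate_succ_apply, ← mul_assoc]
    congr 1
    rw [Nat.factorial_succ]
    push_cast
    rw [mul_inv]

lemma iterate_deriv_eq (φ : 𝓢) (m : ℕ) (x : ℝ) :
    iteratedDeriv m (fun y => φ y) x = (D)^[m] φ x := by
  induction m generalizing φ with
  | zero => simp
  | succ k ih =>
    rw [iteratedDeriv_succ', Function.iterate_succ_apply]
    have : deriv (fun y => φ y) = fun y => (D φ) y := by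
      ext y; simp
    rw [this, ih]

end SP14
end

open MeasureTheory Filter Set

/-- Sokhotski–Plemelj-type formula: as distributions,
`(x ± i0)^{-n} = p.v. x^{-n} ∓ iπ(-1)^{n-1}/(n-1)! δ^{(n-1)}`. The finite part
`p.v. x^{-n}` is realized as `(1/(n-1)!) ⟨p.v. 1/x, φ^{(n-1)}⟩`, and the
pairing with `δ^{(n-1)}` contributes `∓ iπ/(n-1)! φ^{(n-1)}(0)`. -/
theorem stmt_14 (n : ℕ) (hn : 1 ≤ n) (φ : SchwartzMap ℝ ℂ) :
    ∃ L : ℂ,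
      Tendsto (fun δ : ℝ =>
          (1 / ((Nat.factorial (n - 1) : ℝ) : ℂ)) *
            ∫ x in {x : ℝ | δ < |x|}, iteratedDeriv (n - 1) (fun y => φ y) x / (x : ℂ))
        (nhdsWithin 0 (Ioi 0)) (nhds L) ∧
      Tendsto (fun ε : ℝ =>
          ∫ x : ℝ, ((x : ℂ) + (ε : ℂ) * Complex.I) ^ (-(n : ℤ)) * φ x)
        (nhdsWithin 0 (Ioi 0))
        (nhds (L - ((Real.pi : ℂ) * Complex.I / ((Nat.factorial (n - 1) : ℝ) : ℂ)) *
          iteratedDeriv (n - 1) (fun y => φ y) 0)) ∧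
      Tendsto (fun ε : ℝ =>
          ∫ x : ℝ, ((x : ℂ) - (ε : ℂ) * Complex.I) ^ (-(n : ℤ)) * φ x)
        (nhdsWithin 0 (Ioi 0))
        (nhds (L + ((Real.pi : ℂ) * Complex.I / ((Nat.factorial (n - 1) : ℝ) : ℂ)) *
          iteratedDeriv (n - 1) (fun y => φ y) 0)) := by
  obtain ⟨m, rfl⟩ : ∃ m, n = m + 1 := ⟨n - 1, by omega⟩
  simp only [Nat.add_sub_cancel]
  set ψ : SchwartzMap ℝ ℂ := (SchwartzMap.derivCLM ℝ ℂ)^[m] φ with hψdef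
  have hψ : ∀ x : ℝ, iteratedDeriv m (fun y => φ y) x = ψ x := fun x =>
    SP14.iterate_deriv_eq φ m x
  have hfun : (fun x : ℝ => iteratedDeriv m (fun y => φ y) x / (x:ℂ))
      = fun x : ℝ => ((x:ℂ))⁻¹ * ψ x := funext fun x => by
    rw [hψ, div_eq_mul_inv, mul_comm]
  have hcast : (-(((m+1) : ℕ) : ℤ)) = -((m:ℤ)+1) := by push_cast; ring
  refine ⟨(1 / ((m.factorial : ℝ) : ℂ)) * SP14.pvL ψ, ?_, ?_, ?_⟩
  · rw [show (fun δ : ℝ => (1 / ((m.factorial : ℝ) : ℂ)) *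
        ∫ x in {x : ℝ | δ < |x|}, iteratedDeriv m (fun y => φ y) x / (x:ℂ))
        = fun δ : ℝ => (1 / ((m.factorial : ℝ) : ℂ)) *
          ∫ x in {x : ℝ | δ < |x|}, ((x:ℂ))⁻¹ * ψ x from by simp only [hfun]]
    exact (SP14.pv_tendsto ψ).const_mul _
  · have hplem := SP14.plemelj ψ 1 (Or.inl rfl)
    simp only [Complex.ofReal_one, one_mul] at hplem
    have h2 := hplem.const_mul (((m.factorial : ℕ) : ℂ))⁻¹
    have hlim_eq : (((m.factorial : ℕ) : ℂ))⁻¹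
          * (SP14.pvL ψ - (Real.pi:ℂ) * Complex.I * ψ 0)
        = (1 / ((m.factorial : ℝ) : ℂ)) * SP14.pvL ψ
          - ((Real.pi:ℂ) * Complex.I / ((m.factorial : ℝ) : ℂ))
            * iteratedDeriv m (fun y => φ y) 0 := by
      rw [hψ 0]
      push_cast
      ring
    rw [hlim_eq] at h2
    refine Tendsto.congr' ?_ h2
    filter_upwards [self_mem_nhdsWithin] with ε hε
    have hε' : (0:ℝ) < ε := hε
    have h3 := SP14.iter ((ε:ℂ) * Complex.I)
      (by simp [hε'.ne'] : ((ε:ℂ) * Complex.I).im ≠ 0) m φ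
    rw [← hψdef] at h3
    rw [hcast]
    exact h3.symm
  · have hplem := SP14.plemelj ψ (-1) (Or.inr rfl)
    simp only [Complex.ofReal_neg, Complex.ofReal_one, neg_mul, one_mul,
      ← sub_eq_add_neg] at hplem
    have h2 := hplem.const_mul (((m.factorial : ℕ) : ℂ))⁻¹
    have hlim_eq : (((m.factorial : ℕ) : ℂ))⁻¹
          * (SP14.pvL ψ - -((Real.pi:ℂ) * Complex.I * ψ 0))
        = (1 / ((m.factorial : ℝ) : ℂ)) * SP14.pvL ψ
          + ((Real.pi:ℂ) * Complex.I / ((m.factorial : ℝ) : ℂ))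
            * iteratedDeriv m (fun y => φ y) 0 := by
      rw [hψ 0]
      push_cast
      ring
    rw [hlim_eq] at h2
    refine Tendsto.congr' ?_ h2
    filter_upwards [self_mem_nhdsWithin] with ε hε
    have hε' : (0:ℝ) < ε := hε
    have h3 := SP14.iter (-((ε:ℂ) * Complex.I))
      (by simp [hε'.ne'] : (-((ε:ℂ) * Complex.I)).im ≠ 0) m φ
    rw [← hψdef] at h3
    simp only [← sub_eq_add_neg] at h3
    rw [hcast]
    exact h3.symm
end
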